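/- arXiv:2307.02022 — 11 statements merged into one kernel-verified Lean document; each statement's English description precedes it below -/
import Mathlib

section
/- Let b ∈ [0,1], let N be a finite set, let t ∈ (0,1], and let x : N → [0,1] satisfy t + Σ_{u∈N} x_u ≤ b. Then ((1 − e^{−t})/t) · ∏_{u∈N} e^{−x_u} ≥ e^{−b}. -/
open Finset

/-- Key estimate for the randomized `(b/k, e^{-b})` contention resolution scheme:
if `t + ∑_{u ∈ N} x_u ≤ b` with `b, x_u ∈ [0,1]` and `t ∈ (0,1]`, then
`((1 - e^{-t})/t) · ∏_{u ∈ N} e^{-x_u} ≥ e^{-b}`. -/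
theorem randomized_crs_estimate {ι : Type*} (N : Finset ι) (b t : ℝ)
    (hb : b ∈ Set.Icc (0 : ℝ) 1) (ht : t ∈ Set.Ioc (0 : ℝ) 1)
    (x : ι → ℝ) (hx : ∀ u ∈ N, x u ∈ Set.Icc (0 : ℝ) 1)
    (hsum : t + ∑ u ∈ N, x u ≤ b) :
    Real.exp (-b) ≤ ((1 - Real.exp (-t)) / t) * ∏ u ∈ N, Real.exp (-(x u)) := by
  have ht0 := ht.1
  have hprod : ∏ u ∈ N, Real.exp (-(x u)) = Real.exp (-∑ u ∈ N, x u) := by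
    rw [← Real.exp_sum]; congr 1; rw [Finset.sum_neg_distrib]
  rw [hprod]
  have h1 : Real.exp (-t) ≤ (1 - Real.exp (-t)) / t := by
    rw [le_div_iff₀ ht0]
    have h2 : Real.exp (-t) * (t + 1) ≤ 1 := by
      calc Real.exp (-t) * (t + 1) ≤ Real.exp (-t) * Real.exp t :=
            mul_le_mul_of_nonneg_left (by linarith [Real.add_one_le_exp t])
              (Real.exp_pos _).le
        _ = 1 := by rw [← Real.exp_add]; simp
    nlinarith
  calc Real.exp (-b) ≤ Real.exp (-t) * Real.exp (-∑ u ∈ N, x u) := by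
        rw [← Real.exp_add]
        exact Real.exp_le_exp.2 (by linarith)
    _ ≤ (1 - Real.exp (-t)) / t * Real.exp (-∑ u ∈ N, x u) :=
        mul_le_mul_of_nonneg_right h1 (Real.exp_pos _).le
end

section
/- Let v_1, …, v_n be an inductively k-independent ordering of a finite simple graph G with k ≥ 1, let f : 2^V → ℝ be a monotone, normalized, submodular function, let β > 0, let S ⊆ V, and let w : V → ℝ_{≥0} be weights with w_j = 0 whenever v_j ∉ S. Suppose every vertex outside S satisfies the primal-dual rejection condition: for every v_i ∉ S, ν_f(S, v_i) ≤ (1+β) Σ_{v_j ∈ B_i ∩ S} w_j. Then every independent set T of G satisfies f(T) ≤ f(S) + k(1+β) Σ_{i=1}^n w_i. -/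
open Finset

/-- A set of vertices is independent if no two of its vertices are adjacent. -/
def IsIndep {n : ℕ} (G : SimpleGraph (Fin n)) (S : Finset (Fin n)) : Prop :=
  ∀ u ∈ S, ∀ v ∈ S, ¬ G.Adj u v

/-- `A_i`: the neighbors of `v_i` that come after `v_i` in the ordering. -/
def laterNbrs {n : ℕ} (G : SimpleGraph (Fin n)) [DecidableRel G.Adj] (i : Fin n) :
    Finset (Fin n) :=
  Finset.univ.filter (fun j => G.Adj i j ∧ i < j)

/-- `B_i`: the neighbors of `v_i` that come before `v_i` in the ordering. -/
def earlierNbrs {n : ℕ} (G : SimpleGraph (Fin n)) [DecidableRel G.Adj] (i : Fin n) :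
    Finset (Fin n) :=
  Finset.univ.filter (fun j => G.Adj i j ∧ j < i)

/-- The enumeration of `Fin n` (in its natural order) is an inductively `k`-independent
ordering of `G`. -/
def InductivelyKIndep {n : ℕ} (G : SimpleGraph (Fin n)) [DecidableRel G.Adj] (k : ℕ) : Prop :=
  ∀ i : Fin n, ∀ S ⊆ laterNbrs G i, IsIndep G S → S.card ≤ k

/-- A set function is submodular. -/
def Submodular {V : Type*} [DecidableEq V] (f : Finset V → ℝ) : Prop :=
  ∀ A B : Finset V, f (A ∪ B) + f (A ∩ B) ≤ f A + f B

/-- The incremental value `ν_f(S, e) = f(S' ∪ {e}) - f(S')` where `S' = {s ∈ S : s < e}`. -/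
def incv {V : Type*} [LinearOrder V] (f : Finset V → ℝ) (S : Finset V) (e : V) : ℝ :=
  f (insert e (S.filter (fun s => s < e))) - f (S.filter (fun s => s < e))

private lemma marg {n : ℕ} (f : Finset (Fin n) → ℝ) (hsub : Submodular f)
    (hmono : ∀ A B : Finset (Fin n), A ⊆ B → f A ≤ f B)
    {A B : Finset (Fin n)} (hAB : A ⊆ B) (e : Fin n) :
    f (insert e B) - f B ≤ f (insert e A) - f A := by
  have h := hsub (insert e A) B
  rw [Finset.insert_union, Finset.union_eq_right.mpr hAB] at h
  have h2 : f A ≤ f (insert e A ∩ B) := by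
    apply hmono
    exact Finset.subset_inter (Finset.subset_insert _ _) hAB
  linarith

private lemma sum_marg {n : ℕ} (f : Finset (Fin n) → ℝ) (hsub : Submodular f)
    (hmono : ∀ A B : Finset (Fin n), A ⊆ B → f A ≤ f B) (S : Finset (Fin n))
    (D : Finset (Fin n)) :
    f (S ∪ D) ≤ f S + ∑ i ∈ D, (f (insert i S) - f S) := by
  classical
  induction D using Finset.induction_on with
  | empty => simp
  | insert a D ha ih =>
    rw [Finset.union_insert, Finset.sum_insert ha]
    have h := marg f hsub hmono (Finset.subset_union_left : S ⊆ S ∪ D) a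
    linarith

/-- Dual feasibility bound (Corollary `opt-bound`): if every vertex outside the stack `S`
satisfies the primal-dual rejection condition, then for every independent set `T`,
`f(T) ≤ f(S) + k(1+β) ∑ᵢ wᵢ`. -/
theorem primal_dual_opt_bound {n k : ℕ} (hk : 1 ≤ k)
    (G : SimpleGraph (Fin n)) [DecidableRel G.Adj]
    (hG : InductivelyKIndep G k)
    (f : Finset (Fin n) → ℝ) (hsub : Submodular f)
    (hmono : ∀ A B : Finset (Fin n), A ⊆ B → f A ≤ f B) (hnorm : f ∅ = 0)
    (β : ℝ) (hβ : 0 < β)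
    (S : Finset (Fin n)) (w : Fin n → ℝ)
    (hw0 : ∀ j, 0 ≤ w j) (hwS : ∀ j ∉ S, w j = 0)
    (hrej : ∀ i ∉ S, incv f S i ≤ (1 + β) * ∑ j ∈ earlierNbrs G i ∩ S, w j)
    (T : Finset (Fin n)) (hT : IsIndep G T) :
    f T ≤ f S + k * (1 + β) * ∑ i, w i := by
  set D := T \ S with hD
  have hTD : f T ≤ f (S ∪ D) := by
    apply hmono
    rw [hD, Finset.union_sdiff_self_eq_union]
    exact Finset.subset_union_right
  have h1 : f (S ∪ D) ≤ f S + ∑ i ∈ D, (f (insert i S) - f S) :=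
    sum_marg f hsub hmono S D
  have h2 : ∀ i ∈ D, f (insert i S) - f S ≤ (1 + β) * ∑ j ∈ earlierNbrs G i ∩ S, w j := by
    intro i hi
    have hiS : i ∉ S := (Finset.mem_sdiff.mp hi).2
    have hle : f (insert i S) - f S ≤ incv f S i := by
      unfold incv
      convert marg f hsub hmono (Finset.filter_subset (fun s => s < i) S) i using 4
    exact hle.trans (hrej i hiS)
  have h3 : ∑ i ∈ D, (f (insert i S) - f S)
      ≤ ∑ i ∈ D, (1 + β) * ∑ j ∈ earlierNbrs G i ∩ S, w j :=
    Finset.sum_le_sum h2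
  -- swap sums
  have hswap : ∑ i ∈ D, ∑ j ∈ earlierNbrs G i ∩ S, w j
      = ∑ j : Fin n, ((D.filter (fun i => j ∈ earlierNbrs G i ∩ S)).card : ℝ) * w j := by
    have : ∀ i ∈ D, ∑ j ∈ earlierNbrs G i ∩ S, w j
        = ∑ j : Fin n, if j ∈ earlierNbrs G i ∩ S then w j else 0 := by
      intro i _
      rw [Finset.sum_ite_mem, Finset.univ_inter]
    rw [Finset.sum_congr rfl this, Finset.sum_comm]
    refine Finset.sum_congr rfl fun j _ => ?_
    rw [← Finset.sum_filter, Finset.sum_const, nsmul_eq_mul]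
  have hcard : ∀ j : Fin n,
      ((D.filter (fun i => j ∈ earlierNbrs G i ∩ S)).card : ℝ) * w j ≤ (k : ℝ) * w j := by
    intro j
    apply mul_le_mul_of_nonneg_right _ (hw0 j)
    have hck : (D.filter (fun i => j ∈ earlierNbrs G i ∩ S)).card ≤ k := by
      apply hG j
      · intro i hi
        simp only [Finset.mem_filter, earlierNbrs, Finset.mem_inter, Finset.mem_univ,
          true_and] at hi
        simp only [laterNbrs, Finset.mem_filter, Finset.mem_univ, true_and]
        exact ⟨hi.2.1.1.symm, hi.2.1.2⟩
      · intro u hu v hv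
        simp only [Finset.mem_filter] at hu hv
        have huT : u ∈ T := (Finset.mem_sdiff.mp (hD ▸ hu.1)).1
        have hvT : v ∈ T := (Finset.mem_sdiff.mp (hD ▸ hv.1)).1
        exact hT u huT v hvT
    exact_mod_cast hck
  have h4 : ∑ j : Fin n, ((D.filter (fun i => j ∈ earlierNbrs G i ∩ S)).card : ℝ) * w j
      ≤ ∑ j : Fin n, (k : ℝ) * w j := Finset.sum_le_sum fun j _ => hcard j
  have hβ1 : (0:ℝ) ≤ 1 + β := by linarith
  calc f T ≤ f (S ∪ D) := hTD
    _ ≤ f S + ∑ i ∈ D, (f (insert i S) - f S) := h1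
    _ ≤ f S + ∑ i ∈ D, (1 + β) * ∑ j ∈ earlierNbrs G i ∩ S, w j := by linarith
    _ = f S + (1 + β) * ∑ i ∈ D, ∑ j ∈ earlierNbrs G i ∩ S, w j := by
        rw [Finset.mul_sum]
    _ ≤ f S + (1 + β) * ∑ j : Fin n, (k : ℝ) * w j := by
        have := hswap ▸ h4
        nlinarith [mul_le_mul_of_nonneg_left (hswap ▸ h4) hβ1]
    _ = f S + k * (1 + β) * ∑ i, w i := by
        rw [← Finset.mul_sum]; ring
end

section
/- Let v_1, …, v_n enumerate the vertices of a finite simple graph G, let f : 2^V → ℝ be a normalized submodular function, let S ⊆ V, and let w : V → ℝ_{≥0} satisfy w_j = 0 for v_j ∉ S and w_i = ν_f(S, v_i) − Σ_{v_j ∈ B_i ∩ S} w_j for every v_i ∈ S. Let S′ ⊆ S be a set such that for every v_{i′} ∈ S \ S′ there exists v_i ∈ S′ with i > i′ and v_{i′} ∈ N(v_i) (this is the property of the set produced by the second phase, which pops S in reverse insertion order and keeps each vertex not conflicting with vertices already kept). Then f(S′) ≥ Σ_{i=1}^n w_i. -/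
open Finset

lemma sum_biUnion_le_sum {α ι : Type*} [DecidableEq α] (w : α → ℝ) (hw : ∀ j, 0 ≤ w j)
    (s : Finset ι) (t : ι → Finset α) :
    ∑ x ∈ s.biUnion t, w x ≤ ∑ i ∈ s, ∑ x ∈ t i, w x := by
  classical
  induction s using Finset.induction with
  | empty => simp
  | @insert a s h ih =>
    rw [Finset.biUnion_insert, Finset.sum_insert h]
    calc ∑ x ∈ t a ∪ s.biUnion t, w x ≤ ∑ x ∈ t a, w x + ∑ x ∈ s.biUnion t, w x := by
          rw [← Finset.sum_union_inter]
          have := Finset.sum_nonneg (s := t a ∩ s.biUnion t) (fun x _ => hw x)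
          linarith
      _ ≤ _ := by linarith [ih]

lemma telescope {n : ℕ} (f : Finset (Fin n) → ℝ) (hnorm : f ∅ = 0) (T : Finset (Fin n)) :
    f T = ∑ i ∈ T, (f (insert i (T.filter (fun s => s < i))) - f (T.filter (fun s => s < i))) := by
  induction T using Finset.strongInduction with
  | _ T ih =>
    rcases T.eq_empty_or_nonempty with rfl | hT
    · simp [hnorm]
    · set m := T.max' hT with hm
      have hmT : m ∈ T := T.max'_mem hT
      have hmax : ∀ i ∈ T, i ≤ m := fun i hi => T.le_max' i hi
      have hfilter : T.filter (fun s => s < m) = T.erase m := by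
        ext j
        simp only [mem_filter, mem_erase]
        constructor
        · rintro ⟨hj, hlt⟩; exact ⟨ne_of_lt hlt, hj⟩
        · rintro ⟨hne, hj⟩; exact ⟨hj, lt_of_le_of_ne (hmax j hj) hne⟩
      have hins : insert m (T.erase m) = T := Finset.insert_erase hmT
      have key : ∀ i ∈ T.erase m, T.filter (fun s => s < i) = (T.erase m).filter (fun s => s < i) := by
        intro i hi
        have him : i ≤ m := hmax i (Finset.mem_of_mem_erase hi)
        rw [Finset.filter_erase]
        rw [Finset.erase_eq_of_notMem]
        simp only [mem_filter]
        rintro ⟨-, hlt⟩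
        exact absurd him (not_le.mpr hlt)
      rw [← Finset.sum_erase_add _ _ hmT]
      have hsum : ∑ i ∈ T.erase m, (f (insert i (T.filter (fun s => s < i))) - f (T.filter (fun s => s < i)))
          = f (T.erase m) := by
        rw [ih (T.erase m) (Finset.erase_ssubset hmT)]
        apply Finset.sum_congr rfl
        intro i hi
        rw [key i hi]
      rw [hsum, hfilter, hins]
      ring

lemma incv_le {n : ℕ} (f : Finset (Fin n) → ℝ) (hsub : Submodular f)
    (S T : Finset (Fin n)) (hTS : T ⊆ S) (i : Fin n) (_ : i ∈ T) :
    incv f S i ≤ f (insert i (T.filter (fun s => s < i))) - f (T.filter (fun s => s < i)) := by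
  have h := hsub (insert i (T.filter (fun s => s < i))) (S.filter (fun s => s < i))
  have hsub' : T.filter (fun s => s < i) ⊆ S.filter (fun s => s < i) :=
    Finset.filter_subset_filter _ hTS
  have hun : insert i (T.filter (fun s => s < i)) ∪ S.filter (fun s => s < i)
      = insert i (S.filter (fun s => s < i)) := by
    rw [Finset.insert_union, Finset.union_eq_right.mpr hsub']
  have hint : insert i (T.filter (fun s => s < i)) ∩ S.filter (fun s => s < i)
      = T.filter (fun s => s < i) := by
    rw [Finset.insert_inter_of_notMem, Finset.inter_eq_left.mpr hsub']
    simp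
  rw [hun, hint] at h
  unfold incv
  have key : f (insert i (S.filter (fun s => s < i))) - f (S.filter (fun s => s < i)) ≤
      f (insert i (T.filter (fun s => s < i))) - f (T.filter (fun s => s < i)) := by linarith
  convert key using 3 <;> congr 1 <;> congr 1 <;> funext a b <;> exact Subsingleton.elim _ _

lemma sum_incv_le {n : ℕ} (f : Finset (Fin n) → ℝ) (hsub : Submodular f) (hnorm : f ∅ = 0)
    (S T : Finset (Fin n)) (hTS : T ⊆ S) :
    ∑ i ∈ T, incv f S i ≤ f T := by
  rw [telescope f hnorm T]
  exact Finset.sum_le_sum (fun i hi => incv_le f hsub S T hTS i hi)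

/-- Lower bound on the output of the second phase (`lower-bound-pd`): if the weights satisfy
`wᵢ = ν_f(S, vᵢ) − ∑_{vⱼ ∈ Bᵢ ∩ S} wⱼ` on `S` and vanish off `S`, and every vertex of
`S \ S'` has a later neighbor in `S'`, then `f(S') ≥ ∑ᵢ wᵢ`. -/
theorem primal_dual_lower_bound {n : ℕ}
    (G : SimpleGraph (Fin n)) [DecidableRel G.Adj]
    (f : Finset (Fin n) → ℝ) (hsub : Submodular f) (hnorm : f ∅ = 0)
    (S : Finset (Fin n)) (w : Fin n → ℝ)
    (hw0 : ∀ j, 0 ≤ w j) (hwS : ∀ j ∉ S, w j = 0)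
    (hwdef : ∀ i ∈ S, w i = incv f S i - ∑ j ∈ earlierNbrs G i ∩ S, w j)
    (S' : Finset (Fin n)) (hS'sub : S' ⊆ S)
    (hpop : ∀ i' ∈ S \ S', ∃ i ∈ S', i' < i ∧ G.Adj i i') :
    ∑ i, w i ≤ f S' := by
    classical
  have hsumuniv : ∑ i, w i = ∑ i ∈ S, w i := by
    rw [← Finset.sum_subset (Finset.subset_univ S)]
    intro x _ hx
    exact hwS x hx
  have hsplit : ∑ i ∈ S, w i = ∑ i ∈ S', w i + ∑ i ∈ S \ S', w i := by
    rw [add_comm, Finset.sum_sdiff hS'sub]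
  have hsubBU : S \ S' ⊆ S'.biUnion (fun i => earlierNbrs G i ∩ S) := by
    intro i' hi'
    obtain ⟨i, hiS', hlt, hadj⟩ := hpop i' hi'
    refine Finset.mem_biUnion.mpr ⟨i, hiS', ?_⟩
    refine Finset.mem_inter.mpr ⟨?_, (Finset.mem_sdiff.mp hi').1⟩
    simp [earlierNbrs, hadj, hlt]
  have h1 : ∑ i ∈ S \ S', w i ≤ ∑ i ∈ S', ∑ j ∈ earlierNbrs G i ∩ S, w j := by
    calc ∑ i ∈ S \ S', w i
        ≤ ∑ i ∈ S'.biUnion (fun i => earlierNbrs G i ∩ S), w i :=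
          Finset.sum_le_sum_of_subset_of_nonneg hsubBU (fun j _ _ => hw0 j)
      _ ≤ _ := sum_biUnion_le_sum w hw0 S' _
  have h2 : ∑ i ∈ S', w i + ∑ i ∈ S', ∑ j ∈ earlierNbrs G i ∩ S, w j
      = ∑ i ∈ S', incv f S i := by
    rw [← Finset.sum_add_distrib]
    apply Finset.sum_congr rfl
    intro i hi
    rw [hwdef i (hS'sub hi)]
    ring
  have h3 : ∑ i ∈ S', incv f S i ≤ f S' := sum_incv_le f hsub hnorm S S' hS'sub
  linarith
end

section
/- Let v_1, …, v_n enumerate the vertices of a finite simple graph G, let f : 2^V → ℝ be a normalized submodular function, let β > 0, let S ⊆ V, and let w : V → ℝ_{≥0} satisfy w_j = 0 for v_j ∉ S and, for every v_i ∈ S, both w_i = ν_f(S, v_i) − Σ_{v_j ∈ B_i ∩ S} w_j and ν_f(S, v_i) ≥ (1+β) Σ_{v_j ∈ B_i ∩ S} w_j. Then f(S) ≤ ((1+β)/β) Σ_{i=1}^n w_i. -/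
open Finset

/-- Upper bound on the stack value (`upper-bound-mu`): under the weight recurrence and the
acceptance inequality on `S`, `f(S) ≤ ((1+β)/β) ∑ᵢ wᵢ`. -/
theorem primal_dual_upper_bound_mu {n : ℕ}
    (G : SimpleGraph (Fin n)) [DecidableRel G.Adj]
    (f : Finset (Fin n) → ℝ) (hsub : Submodular f) (hnorm : f ∅ = 0)
    (β : ℝ) (hβ : 0 < β)
    (S : Finset (Fin n)) (w : Fin n → ℝ)
    (hw0 : ∀ j, 0 ≤ w j) (hwS : ∀ j ∉ S, w j = 0)
    (hwdef : ∀ i ∈ S, w i = incv f S i - ∑ j ∈ earlierNbrs G i ∩ S, w j)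
    (hacc : ∀ i ∈ S, (1 + β) * ∑ j ∈ earlierNbrs G i ∩ S, w j ≤ incv f S i) :
    f S ≤ ((1 + β) / β) * ∑ i, w i := by
  -- telescoping identity
  have htel : ∀ T : Finset (Fin n),
      ∑ i ∈ T, (f (T.filter (fun s => s ≤ i)) - f (T.filter (fun s => s < i))) = f T - f ∅ := by
    intro T
    induction T using Finset.induction_on_max with
    | empty => simp
    | insert a T ha ih =>
      have hnotmem : a ∉ T := fun h => absurd (ha a h) (lt_irrefl a)
      rw [Finset.sum_insert hnotmem]
      have h1 : (insert a T).filter (fun s => s ≤ a) = insert a T := by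
        rw [Finset.filter_eq_self]
        intro x hx
        rcases Finset.mem_insert.mp hx with rfl | hx
        · exact le_refl _
        · exact (ha x hx).le
      have h2 : (insert a T).filter (fun s => s < a) = T := by
        rw [Finset.filter_insert, if_neg (lt_irrefl a), Finset.filter_eq_self]
        exact fun x hx => ha x hx
      have h3 : ∀ i ∈ T,
          f ((insert a T).filter (fun s => s ≤ i)) - f ((insert a T).filter (fun s => s < i))
          = f (T.filter (fun s => s ≤ i)) - f (T.filter (fun s => s < i)) := by
        intro i hi
        have hai : ¬ a ≤ i := not_le.mpr (ha i hi)
        rw [Finset.filter_insert, if_neg hai, Finset.filter_insert,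
          if_neg (fun h => hai (le_of_lt h))]
      rw [Finset.sum_congr rfl h3, ih, h1, h2]
      ring
  have hfilter : ∀ i ∈ S, insert i (S.filter (fun s => s < i)) = S.filter (fun s => s ≤ i) := by
    intro i hi
    ext x
    simp only [Finset.mem_insert, Finset.mem_filter]
    constructor
    · rintro (rfl | ⟨hx, hlt⟩)
      · exact ⟨hi, le_refl _⟩
      · exact ⟨hx, hlt.le⟩
    · rintro ⟨hx, hle⟩
      rcases hle.lt_or_eq with h | rfl
      · exact Or.inr ⟨hx, h⟩
      · exact Or.inl rfl
  have hfS : f S = ∑ i ∈ S, incv f S i := by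
    have := htel S
    rw [hnorm, sub_zero] at this
    rw [← this]
    refine Finset.sum_congr rfl fun i hi => ?_
    rw [incv]
    congr 2
    convert (hfilter i hi).symm using 3
  -- pointwise bound
  have hpt : ∀ i ∈ S, incv f S i ≤ ((1 + β) / β) * w i := by
    intro i hi
    set B := ∑ j ∈ earlierNbrs G i ∩ S, w j with hB
    have h1 := hwdef i hi
    have h2 := hacc i hi
    have hinc : incv f S i = w i + B := by rw [h1]; ring
    rw [hinc] at h2 ⊢
    have hBle : β * B ≤ w i := by nlinarith
    rw [div_mul_eq_mul_div, le_div_iff₀ hβ]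
    nlinarith
  have hsum : ∑ i ∈ S, w i = ∑ i, w i := by
    refine Finset.sum_subset (Finset.subset_univ S) fun x _ hx => hwS x hx
  calc f S = ∑ i ∈ S, incv f S i := hfS
    _ ≤ ∑ i ∈ S, ((1 + β) / β) * w i := Finset.sum_le_sum hpt
    _ = ((1 + β) / β) * ∑ i ∈ S, w i := by rw [Finset.mul_sum]
    _ = ((1 + β) / β) * ∑ i, w i := by rw [hsum]
end

section
/- Let v_1, …, v_n be an inductively k-independent ordering of a finite simple graph G with k ≥ 1, let f : 2^V → ℝ be a monotone, normalized, submodular function, and let β > 0. Suppose S ⊆ V and w : V → ℝ_{≥0} satisfy: (i) w_j = 0 for v_j ∉ S; (ii) for every v_i ∈ S, ν_f(S, v_i) > (1+β) Σ_{v_j ∈ B_i ∩ S} w_j and w_i = ν_f(S, v_i) − Σ_{v_j ∈ B_i ∩ S} w_j; (iii) for every v_i ∉ S, ν_f(S, v_i) ≤ (1+β) Σ_{v_j ∈ B_i ∩ S} w_j. Let S′ ⊆ S be independent with the property that every v_{i′} ∈ S \ S′ has a neighbor v_i ∈ S′ with i > i′. Then every independent set T of G satisfies f(T) ≤ (1+β)(1/β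 + k) f(S′); in particular, for β = 1/√k, f(T) ≤ (k + 1 + 2√k) f(S′). -/
open Finset

section Helpers

variable {n : ℕ}

lemma incv_def' (f : Finset (Fin n) → ℝ) (S : Finset (Fin n)) (i : Fin n) :
    incv f S i = f (insert i (S.filter (fun s => s < i))) - f (S.filter (fun s => s < i)) := by
  unfold incv
  congr

lemma incv_nonneg' (f : Finset (Fin n) → ℝ)
    (hmono : ∀ A B : Finset (Fin n), A ⊆ B → f A ≤ f B) (S : Finset (Fin n)) (i : Fin n) :
    0 ≤ incv f S i := by
  rw [incv_def']
  exact sub_nonneg.2 (hmono _ _ (Finset.subset_insert _ _))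

lemma marginal_le' {f : Finset (Fin n) → ℝ} (hsub : Submodular f)
    {X Y : Finset (Fin n)} (hYX : Y ⊆ X) {i : Fin n} (hi : i ∉ X) :
    f (insert i X) - f X ≤ f (insert i Y) - f Y := by
  have h := hsub (insert i Y) X
  have h1 : insert i Y ∪ X = insert i X := by
    rw [Finset.insert_union, Finset.union_eq_right.2 hYX]
  have h2 : insert i Y ∩ X = Y := by
    ext j
    simp only [Finset.mem_inter, Finset.mem_insert]
    constructor
    · rintro ⟨hj1 | hj1, hj2⟩
      · exact absurd (hj1 ▸ hj2) hi
      · exact hj1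
    · intro hj; exact ⟨Or.inr hj, hYX hj⟩
  rw [h1, h2] at h
  linarith

lemma telescope' (f : Finset (Fin n) → ℝ) (hnorm : f ∅ = 0) (S : Finset (Fin n)) :
    f S = ∑ i ∈ S, incv f S i := by
  induction S using Finset.strongInduction with
  | _ S ih =>
    rcases S.eq_empty_or_nonempty with rfl | hS
    · simp [hnorm]
    · set m := S.max' hS with hm
      have hmS : m ∈ S := S.max'_mem hS
      have hfilter : S.filter (fun s => s < m) = S.erase m := by
        ext j
        simp only [Finset.mem_filter, Finset.mem_erase]
        constructor
        · rintro ⟨hj, hlt⟩; exact ⟨hlt.ne, hj⟩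
        · rintro ⟨hne, hj⟩; exact ⟨hj, lt_of_le_of_ne (S.le_max' j hj) hne⟩
      have hkey : incv f S m = f S - f (S.erase m) := by
        rw [incv_def', hfilter, Finset.insert_erase hmS]
      have hsum : ∀ i ∈ S.erase m, incv f S i = incv f (S.erase m) i := by
        intro i hi
        have him : i < m :=
          lt_of_le_of_ne (S.le_max' i (Finset.mem_of_mem_erase hi)) (Finset.ne_of_mem_erase hi)
        have hfe : S.filter (fun s => s < i) = (S.erase m).filter (fun s => s < i) := by
          ext j
          simp only [Finset.mem_filter, Finset.mem_erase]
          constructor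
          · rintro ⟨hj, hlt⟩; exact ⟨⟨(hlt.trans him).ne, hj⟩, hlt⟩
          · rintro ⟨⟨_, hj⟩, hlt⟩; exact ⟨hj, hlt⟩
        rw [incv_def', incv_def', hfe]
      calc f S = incv f S m + f (S.erase m) := by rw [hkey]; ring
        _ = incv f S m + ∑ i ∈ S.erase m, incv f (S.erase m) i := by
            rw [ih (S.erase m) (Finset.erase_ssubset hmS)]
        _ = incv f S m + ∑ i ∈ S.erase m, incv f S i := by
            rw [Finset.sum_congr rfl hsum]
        _ = ∑ i ∈ S, incv f S i := Finset.add_sum_erase S _ hmS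

lemma union_le' (f : Finset (Fin n) → ℝ) (hsub : Submodular f)
    (hmono : ∀ A B : Finset (Fin n), A ⊆ B → f A ≤ f B) (S : Finset (Fin n))
    (U : Finset (Fin n)) :
    f (S ∪ U) ≤ f S + ∑ i ∈ U, incv f S i := by
  induction U using Finset.strongInduction with
  | _ U ih =>
    rcases U.eq_empty_or_nonempty with rfl | hU
    · simp
    · set m := U.max' hU with hm
      have hmU : m ∈ U := U.max'_mem hU
      have h1 : S ∪ U = insert m (S ∪ U.erase m) := by
        rw [← Finset.union_insert, Finset.insert_erase hmU]
      have step : f (S ∪ U) ≤ f (S ∪ U.erase m) + incv f S m := by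
        rw [h1]
        by_cases hmem : m ∈ S ∪ U.erase m
        · rw [Finset.insert_eq_self.2 hmem]
          have := incv_nonneg' f hmono S m
          linarith
        · have hY : S.filter (fun s => s < m) ⊆ S ∪ U.erase m :=
            (Finset.filter_subset _ S).trans Finset.subset_union_left
          have h := marginal_le' hsub hY hmem
          rw [incv_def']
          linarith
      have hrec := ih (U.erase m) (Finset.erase_ssubset hmU)
      have hsum : ∑ i ∈ U, incv f S i = incv f S m + ∑ i ∈ U.erase m, incv f S i :=
        (Finset.add_sum_erase U _ hmU).symm
      linarith

end Helpers

/-- Guarantee of the deterministic primal-dual algorithm for monotone submodular maximization: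
given the invariants of the algorithm (stack `S`, weights `w`, output `S'`), every independent
set `T` satisfies `f(T) ≤ (1+β)(1/β + k) f(S')`; in particular for `β = 1/√k`,
`f(T) ≤ (k + 1 + 2√k) f(S')`. -/
theorem primal_dual_monotone_guarantee {n k : ℕ} (hk : 1 ≤ k)
    (G : SimpleGraph (Fin n)) [DecidableRel G.Adj]
    (hG : InductivelyKIndep G k)
    (f : Finset (Fin n) → ℝ) (hsub : Submodular f)
    (hmono : ∀ A B : Finset (Fin n), A ⊆ B → f A ≤ f B) (hnorm : f ∅ = 0)
    (β : ℝ) (hβ : 0 < β)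
    (S : Finset (Fin n)) (w : Fin n → ℝ)
    (hw0 : ∀ j, 0 ≤ w j) (hwS : ∀ j ∉ S, w j = 0)
    (hin : ∀ i ∈ S, (1 + β) * ∑ j ∈ earlierNbrs G i ∩ S, w j < incv f S i ∧
      w i = incv f S i - ∑ j ∈ earlierNbrs G i ∩ S, w j)
    (hout : ∀ i ∉ S, incv f S i ≤ (1 + β) * ∑ j ∈ earlierNbrs G i ∩ S, w j)
    (S' : Finset (Fin n)) (hS'sub : S' ⊆ S) (hS'ind : IsIndep G S')
    (hpop : ∀ i' ∈ S \ S', ∃ i ∈ S', i' < i ∧ G.Adj i i')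
    (T : Finset (Fin n)) (hT : IsIndep G T) :
    f T ≤ (1 + β) * (1 / β + k) * f S' ∧
    (β = 1 / Real.sqrt k → f T ≤ (k + 1 + 2 * Real.sqrt k) * f S') := by
  classical
  have hWnn : ∀ i : Fin n, (0:ℝ) ≤ ∑ j ∈ earlierNbrs G i ∩ S, w j :=
    fun i => Finset.sum_nonneg (fun j _ => hw0 j)
  have hincv_eq : ∀ i ∈ S, incv f S i = w i + ∑ j ∈ earlierNbrs G i ∩ S, w j := by
    intro i hi
    have := (hin i hi).2
    linarith
  have hWle : ∀ i ∈ S, β * ∑ j ∈ earlierNbrs G i ∩ S, w j ≤ w i := by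
    intro i hi
    have h1 := (hin i hi).1
    have h2 := hincv_eq i hi
    nlinarith [hWnn i]
  have hwsum_nn : (0:ℝ) ≤ ∑ j ∈ S, w j := Finset.sum_nonneg fun j _ => hw0 j
  -- f S ≤ (1 + 1/β) * Σ w
  have hfS : f S ≤ (1 + 1/β) * ∑ j ∈ S, w j := by
    rw [telescope' f hnorm S]
    have hterm : ∀ i ∈ S, incv f S i ≤ (1 + 1/β) * w i := by
      intro i hi
      have h2 := hincv_eq i hi
      have h3 := hWle i hi
      have hβ' : (0:ℝ) < 1/β := by positivity
      have h4 : (∑ j ∈ earlierNbrs G i ∩ S, w j) ≤ (1/β) * w i := by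
        rw [div_mul_eq_mul_div, le_div_iff₀ hβ]
        nlinarith
      have h5 : (1 + 1/β) * w i = w i + (1/β) * w i := by ring
      linarith
    calc ∑ i ∈ S, incv f S i ≤ ∑ i ∈ S, (1 + 1/β) * w i := Finset.sum_le_sum hterm
      _ = (1 + 1/β) * ∑ j ∈ S, w j := by rw [Finset.mul_sum]
  -- earlierNbrs ∩ S as filter
  have hEN : ∀ i : Fin n, earlierNbrs G i ∩ S = S.filter (fun j => G.Adj i j ∧ j < i) := by
    intro i
    ext j
    simp only [earlierNbrs, Finset.mem_inter, Finset.mem_filter, Finset.mem_univ, true_and]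
    tauto
  -- cross bound
  have hcross : ∑ i ∈ T \ S, ∑ j ∈ earlierNbrs G i ∩ S, w j ≤ (k:ℝ) * ∑ j ∈ S, w j := by
    have h1 : ∑ i ∈ T \ S, ∑ j ∈ earlierNbrs G i ∩ S, w j
        = ∑ j ∈ S, ∑ i ∈ T \ S, (if G.Adj i j ∧ j < i then w j else 0) := by
      rw [Finset.sum_comm]
      refine Finset.sum_congr rfl fun i _ => ?_
      rw [hEN i, Finset.sum_filter]
    rw [h1]
    have h2 : ∀ j ∈ S, ∑ i ∈ T \ S, (if G.Adj i j ∧ j < i then w j else 0) ≤ (k:ℝ) * w j := by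
      intro j hj
      rw [← Finset.sum_filter]
      set D := (T \ S).filter (fun i => G.Adj i j ∧ j < i) with hD
      have hDsub : D ⊆ laterNbrs G j := by
        intro i hi
        simp only [hD, Finset.mem_filter, Finset.mem_sdiff] at hi
        simp only [laterNbrs, Finset.mem_filter, Finset.mem_univ, true_and]
        exact ⟨hi.2.1.symm, hi.2.2⟩
      have hDT : D ⊆ T := by
        intro i hi
        simp only [hD, Finset.mem_filter, Finset.mem_sdiff] at hi
        exact hi.1.1
      have hDind : IsIndep G D := fun u hu v hv => hT u (hDT hu) v (hDT hv)
      have hcard := hG j D hDsub hDind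
      calc ∑ _i ∈ D, w j = (D.card : ℝ) * w j := by rw [Finset.sum_const, nsmul_eq_mul]
        _ ≤ (k:ℝ) * w j := by
            apply mul_le_mul_of_nonneg_right _ (hw0 j)
            exact_mod_cast hcard
    calc ∑ j ∈ S, ∑ i ∈ T \ S, (if G.Adj i j ∧ j < i then w j else 0)
        ≤ ∑ j ∈ S, (k:ℝ) * w j := Finset.sum_le_sum h2
      _ = (k:ℝ) * ∑ j ∈ S, w j := by rw [Finset.mul_sum]
  -- charging: Σ_S w ≤ f S'
  have hcharge : ∑ j ∈ S, w j ≤ f S' := by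
    have hmain : ∑ j ∈ S \ S', w j ≤ ∑ i ∈ S', ∑ j ∈ earlierNbrs G i ∩ S, w j := by
      choose! c hc1 hc2 hc3 using hpop
      set g : Fin n → Fin n := fun j => c j with hg
      have hmaps : ∀ j ∈ S \ S', g j ∈ S' := fun j hj => hc1 j hj
      rw [← Finset.sum_fiberwise_of_maps_to hmaps w]
      refine Finset.sum_le_sum fun i hi => ?_
      refine Finset.sum_le_sum_of_subset_of_nonneg ?_ (fun j _ _ => hw0 j)
      intro j hj
      simp only [Finset.mem_filter] at hj
      obtain ⟨hjm, hgj⟩ := hj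
      have hjS : j ∈ S := (Finset.mem_sdiff.1 hjm).1
      have h2 := hc2 j hjm
      have h3 := hc3 j hjm
      simp only [hg] at hgj
      rw [Finset.mem_inter]
      refine ⟨?_, hjS⟩
      simp only [earlierNbrs, Finset.mem_filter, Finset.mem_univ, true_and]
      rw [← hgj]
      exact ⟨h3, h2⟩
    have hsplit : ∑ j ∈ S \ S', w j + ∑ j ∈ S', w j = ∑ j ∈ S, w j :=
      Finset.sum_sdiff hS'sub
    have hS'eq : ∑ i ∈ S', (w i + ∑ j ∈ earlierNbrs G i ∩ S, w j) = ∑ i ∈ S', incv f S i :=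
      Finset.sum_congr rfl fun i hi => (hincv_eq i (hS'sub hi)).symm
    have hmarg : ∀ i ∈ S', incv f S i ≤ incv f S' i := by
      intro i hi
      rw [incv_def', incv_def']
      apply marginal_le' hsub (Finset.filter_subset_filter _ hS'sub)
      simp [Finset.mem_filter]
    have htel : ∑ i ∈ S', incv f S' i = f S' := (telescope' f hnorm S').symm
    have h6 : ∑ i ∈ S', incv f S i ≤ ∑ i ∈ S', incv f S' i := Finset.sum_le_sum hmarg
    have h7 : ∑ i ∈ S', (w i + ∑ j ∈ earlierNbrs G i ∩ S, w j)
        = ∑ i ∈ S', w i + ∑ i ∈ S', ∑ j ∈ earlierNbrs G i ∩ S, w j :=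
      Finset.sum_add_distrib
    linarith
  -- main chain
  have hTsub : T ⊆ S ∪ (T \ S) := by
    intro x hx
    rw [Finset.mem_union, Finset.mem_sdiff]
    by_cases h : x ∈ S
    · exact Or.inl h
    · exact Or.inr ⟨hx, h⟩
  have hmain1 : f T ≤ f S + ∑ i ∈ T \ S, incv f S i :=
    (hmono _ _ hTsub).trans (union_le' f hsub hmono S (T \ S))
  have h2 : ∑ i ∈ T \ S, incv f S i
      ≤ (1 + β) * ∑ i ∈ T \ S, ∑ j ∈ earlierNbrs G i ∩ S, w j := by
    rw [Finset.mul_sum]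
    refine Finset.sum_le_sum fun i hi => hout i (Finset.mem_sdiff.1 hi).2
  have h1β : (0:ℝ) < 1 + β := by linarith
  have hcoef : f T ≤ (1 + β) * (1 / β + (k:ℝ)) * ∑ j ∈ S, w j := by
    have h3 : (1 + β) * ∑ i ∈ T \ S, ∑ j ∈ earlierNbrs G i ∩ S, w j
        ≤ (1 + β) * ((k:ℝ) * ∑ j ∈ S, w j) :=
      mul_le_mul_of_nonneg_left hcross h1β.le
    have h4 : (1 + 1/β) * ∑ j ∈ S, w j + (1 + β) * ((k:ℝ) * ∑ j ∈ S, w j)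
        = (1 + β) * (1 / β + (k:ℝ)) * ∑ j ∈ S, w j := by
      field_simp
      ring
    linarith
  have hcnn : (0:ℝ) ≤ (1 + β) * (1 / β + (k:ℝ)) := by positivity
  have first : f T ≤ (1 + β) * (1 / β + (k:ℝ)) * f S' := by
    calc f T ≤ (1 + β) * (1 / β + (k:ℝ)) * ∑ j ∈ S, w j := hcoef
      _ ≤ (1 + β) * (1 / β + (k:ℝ)) * f S' := mul_le_mul_of_nonneg_left hcharge hcnn
  refine ⟨first, fun hβk => ?_⟩
  have hk0 : (0:ℝ) < (k:ℝ) := by exact_mod_cast Nat.lt_of_lt_of_le Nat.zero_lt_one hk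
  have hs : Real.sqrt k * Real.sqrt k = (k:ℝ) := Real.mul_self_sqrt hk0.le
  have hspos : (0:ℝ) < Real.sqrt k := Real.sqrt_pos.2 hk0
  have hco : (1 + β) * (1 / β + (k:ℝ)) = (k:ℝ) + 1 + 2 * Real.sqrt k := by
    rw [hβk, one_div_one_div]
    field_simp
    nlinarith [hs, hspos]
  calc f T ≤ (1 + β) * (1 / β + (k:ℝ)) * f S' := first
    _ = ((k:ℝ) + 1 + 2 * Real.sqrt k) * f S' := by rw [hco]
end

section
/- Let f : 2^V → ℝ_{≥0} be a nonnegative submodular function on a finite ground set V, let T ⊆ V be a fixed set, let p ∈ [0,1], and let S be a random subset of V (drawn from an arbitrary, not necessarily independent, finitely supported probability distribution over subsets of V) such that Pr[v ∈ S] ≤ p for every v ∈ V. Then E[f(S ∪ T)] ≥ (1 − p) · f(T). -/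
open Finset

section CoreAux

variable {V : Type*} [DecidableEq V] [Fintype V]

private lemma sumsq_le (L : Multiset (Finset V)) :
    (L.map fun A => A.card ^ 2).sum ≤ Multiset.card L * Fintype.card V ^ 2 := by
  have := Multiset.sum_le_card_nsmul (L.map fun A => A.card ^ 2) (Fintype.card V ^ 2) ?_
  · simpa [smul_eq_mul] using this
  · intro x hx
    obtain ⟨A, _, rfl⟩ := Multiset.mem_map.mp hx
    exact Nat.pow_le_pow_left (Finset.card_le_univ A) 2

private lemma card_filter_L {p : Finset V → Prop} [DecidablePred p]
    (A : Finset V) (L : Multiset (Finset V)) :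
    Multiset.card ((A ::ₘ L).filter p)
      = (if p A then 1 else 0) + Multiset.card (L.filter p) := by
  by_cases h : p A <;> simp [Multiset.filter_cons, h] <;> omega

private lemma card_filter_bind {α β : Type*} (s : Multiset α) (t : α → Multiset β)
    (p : β → Prop) [DecidablePred p] :
    Multiset.card ((s.bind t).filter p)
      = (s.map fun a => Multiset.card ((t a).filter p)).sum := by
  induction s using Multiset.induction with
  | empty => simp
  | cons a s ihs => simp [Multiset.cons_bind, Multiset.filter_add, ihs]

/-- Core combinatorial lemma: for a multiset `L` of sets in which every element of `V`
occurs in at most `P` members, a nonnegative submodular `f` satisfies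
`∑_{A ∈ L} f A ≥ (|L| - P) * f ∅`.  Proved by uncrossing, with a natural-number
potential for termination. -/
lemma core_multiset (f : Finset V → ℝ) (hnn : ∀ A, 0 ≤ f A) (hsub : Submodular f) (P : ℕ) :
    ∀ (N : ℕ) (L : Multiset (Finset V)),
      Multiset.card L * (Fintype.card V ^ 2 + 1) - (L.map fun A => A.card ^ 2).sum ≤ N →
      (∀ v : V, Multiset.card (L.filter fun A => v ∈ A) ≤ P) →
      ((Multiset.card L : ℝ) - P) * f ∅ ≤ (L.map f).sum := by
  intro N
  induction N using Nat.strong_induction_on with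
  | _ N ih =>
  intro L hN hcount
  by_cases hPL : Multiset.card L ≤ P
  · have h1 : ((Multiset.card L : ℝ) - P) ≤ 0 := by
      have : (Multiset.card L : ℝ) ≤ P := by exact_mod_cast hPL
      linarith
    have h2 : (0:ℝ) ≤ (L.map f).sum := by
      apply Multiset.sum_nonneg
      intro x hx
      obtain ⟨A, _, rfl⟩ := Multiset.mem_map.mp hx
      exact hnn A
    nlinarith [hnn ∅]
  · push_neg at hPL
    have hL1 : 1 ≤ Multiset.card L := lt_of_le_of_lt (Nat.zero_le _) hPL
    by_cases hemp : (∅ : Finset V) ∈ L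
    · -- peel off an empty set
      set L' := L.erase ∅ with hL'
      have hLL : (∅ : Finset V) ::ₘ L' = L := Multiset.cons_erase hemp
      have hcard' : Multiset.card L' = Multiset.card L - 1 := by
        rw [← hLL]; simp
      have hsq : ((L'.map fun A => A.card ^ 2).sum) = (L.map fun A => A.card ^ 2).sum := by
        rw [← hLL]; simp
      have hmeas : Multiset.card L' * (Fintype.card V ^ 2 + 1)
          - (L'.map fun A => A.card ^ 2).sum < N := by
        have hb := sumsq_le L'
        rw [hsq, hcard'] at *
        have e1 : Multiset.card L * (Fintype.card V ^ 2 + 1)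
            = (Multiset.card L - 1) * (Fintype.card V ^ 2 + 1) + (Fintype.card V ^ 2 + 1) := by
          have h2 : Multiset.card L - 1 + 1 = Multiset.card L := Nat.succ_pred_eq_of_pos hL1
          calc Multiset.card L * (Fintype.card V ^ 2 + 1)
              = (Multiset.card L - 1 + 1) * (Fintype.card V ^ 2 + 1) := by rw [h2]
            _ = (Multiset.card L - 1) * (Fintype.card V ^ 2 + 1) + (Fintype.card V ^ 2 + 1) := by
                ring
        have e2 : (Multiset.card L - 1) * (Fintype.card V ^ 2 + 1)
            = (Multiset.card L - 1) * Fintype.card V ^ 2 + (Multiset.card L - 1) :=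
          Nat.mul_succ _ _
        omega
      have hcount' : ∀ v : V, Multiset.card (L'.filter fun A => v ∈ A) ≤ P := by
        intro v
        refine le_trans (Multiset.card_le_card
          (Multiset.filter_le_filter _ (Multiset.erase_le _ _))) (hcount v)
      have IH := ih _ hmeas L' le_rfl hcount'
      have hsum : (L.map f).sum = f ∅ + (L'.map f).sum := by
        rw [← hLL]; simp
      rw [hsum]
      have hc : (Multiset.card L : ℝ) = (Multiset.card L' : ℝ) + 1 := by
        rw [hcard']
        have : 1 ≤ Multiset.card L := hL1
        push_cast [Nat.cast_sub this]
        ring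
      rw [hc]
      nlinarith [hnn (∅ : Finset V)]
    · by_cases hchain : ∀ A ∈ L, ∀ B ∈ L, A ⊆ B ∨ B ⊆ A
      · exfalso
        have hLne : L ≠ 0 := by
          intro h; rw [h] at hL1; simp at hL1
        have hts : L.toFinset.Nonempty := by
          simp [Multiset.toFinset_nonempty, hLne]
        obtain ⟨A₀, hA₀, hmin⟩ := Finset.exists_min_image L.toFinset Finset.card hts
        have hA₀L : A₀ ∈ L := Multiset.mem_toFinset.mp hA₀
        have hsuball : ∀ B ∈ L, A₀ ⊆ B := by
          intro B hB
          rcases hchain A₀ hA₀L B hB with h | h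
          · exact h
          · have : A₀.card ≤ B.card := hmin B (Multiset.mem_toFinset.mpr hB)
            have : B = A₀ := Finset.eq_of_subset_of_card_le h this
            rw [this]
        have hA₀ne : A₀ ≠ ∅ := by
          intro h; rw [h] at hA₀L; exact hemp hA₀L
        obtain ⟨v, hv⟩ := Finset.nonempty_iff_ne_empty.mpr hA₀ne
        have : Multiset.card (L.filter fun A => v ∈ A) = Multiset.card L := by
          congr 1
          apply Multiset.filter_eq_self.mpr
          intro B hB
          exact hsuball B hB hv
        have := hcount v
        omega
      · push_neg at hchain
        obtain ⟨A, hA, B, hB, hAB, hBA⟩ := hchain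
        have hne : B ≠ A := by
          intro h; rw [h] at hAB; exact hAB le_rfl
        have hBe : B ∈ L.erase A := (Multiset.mem_erase_of_ne hne).mpr hB
        set R := (L.erase A).erase B with hR
        have hdec1 : B ::ₘ R = L.erase A := Multiset.cons_erase hBe
        have hdec2 : A ::ₘ B ::ₘ R = L := by rw [hdec1]; exact Multiset.cons_erase hA
        set L' := (A ∪ B) ::ₘ (A ∩ B) ::ₘ R with hLp
        have hcardeq : Multiset.card L' = Multiset.card L := by
          rw [← hdec2, hLp]; simp
        have hu : A.card < (A ∪ B).card := by
          rcases lt_or_eq_of_le (Finset.card_le_card (Finset.subset_union_left : A ⊆ A ∪ B)) with h | h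
          · exact h
          · exfalso
            have : A ∪ B = A := (Finset.eq_of_subset_of_card_le
              (Finset.subset_union_left) h.ge).symm
            exact hBA (this ▸ Finset.subset_union_right)
        have hib : (A ∩ B).card < B.card := by
          rcases lt_or_eq_of_le (Finset.card_le_card (Finset.inter_subset_right : A ∩ B ⊆ B)) with h | h
          · exact h
          · exfalso
            have : A ∩ B = B := Finset.eq_of_subset_of_card_le Finset.inter_subset_right h.ge
            exact hBA (this ▸ Finset.inter_subset_left)
        have hsumcard : (A ∪ B).card + (A ∩ B).card = A.card + B.card :=
          Finset.card_union_add_card_inter A B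
        have hia : (A ∩ B).card < A.card := by
          rcases lt_or_eq_of_le (Finset.card_le_card (Finset.inter_subset_left : A ∩ B ⊆ A)) with h | h
          · exact h
          · exfalso
            have : A ∩ B = A := Finset.eq_of_subset_of_card_le Finset.inter_subset_left h.ge
            exact hAB (this ▸ Finset.inter_subset_right)
        have hsqlt : A.card ^ 2 + B.card ^ 2 < (A ∪ B).card ^ 2 + (A ∩ B).card ^ 2 := by
          zify at hsumcard hu hib hia ⊢
          nlinarith [hsumcard, hu, hib, hia,
            mul_pos (show (0:ℤ) < (B.card : ℤ) - ((A ∩ B).card : ℤ) by linarith)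
              (show (0:ℤ) < (A.card : ℤ) - ((A ∩ B).card : ℤ) by linarith)]
        have hsq' : (L.map fun A => A.card ^ 2).sum < (L'.map fun A => A.card ^ 2).sum := by
          rw [← hdec2, hLp]
          simp only [Multiset.map_cons, Multiset.sum_cons]
          omega
        have hmeas : Multiset.card L' * (Fintype.card V ^ 2 + 1)
            - (L'.map fun A => A.card ^ 2).sum < N := by
          have hb' := sumsq_le L'
          rw [hcardeq] at hb'
          have hxy : Multiset.card L * Fintype.card V ^ 2
              ≤ Multiset.card L * (Fintype.card V ^ 2 + 1) :=
            Nat.mul_le_mul (le_refl _) (by omega)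
          rw [hcardeq]
          omega
        have hcount' : ∀ v : V, Multiset.card (L'.filter fun A => v ∈ A) ≤ P := by
          intro v
          have e1 : Multiset.card (L'.filter fun C => v ∈ C)
              = Multiset.card (L.filter fun C => v ∈ C) := by
            rw [← hdec2, hLp]
            rw [card_filter_L, card_filter_L, card_filter_L, card_filter_L]
            by_cases hvA : v ∈ A <;> by_cases hvB : v ∈ B <;>
              simp [Finset.mem_union, Finset.mem_inter, hvA, hvB]
          rw [e1]; exact hcount v
        have IH := ih _ hmeas L' le_rfl hcount'
        have hsumle : (L'.map f).sum ≤ (L.map f).sum := by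
          rw [← hdec2, hLp]
          simp only [Multiset.map_cons, Multiset.sum_cons]
          have := hsub A B
          linarith
        calc ((Multiset.card L : ℝ) - P) * f ∅
            = ((Multiset.card L' : ℝ) - P) * f ∅ := by rw [hcardeq]
          _ ≤ (L'.map f).sum := IH
          _ ≤ (L.map f).sum := hsumle

end CoreAux

/-- Lemma of Buchbinder–Feldman–Naor–Schwartz: if `f` is nonnegative submodular, `T` is fixed,
and `S` is a random set (from an arbitrary finitely supported distribution, here modeled by a
probability mass function `μ` on a finite outcome space `Ω`) such that each element lies in `S`
with probability at most `p`, then `E[f(S ∪ T)] ≥ (1 - p) f(T)`. -/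
theorem expected_union_lower_bound {V : Type*} [DecidableEq V] [Fintype V]
    (f : Finset V → ℝ) (hnn : ∀ A : Finset V, 0 ≤ f A) (hsub : Submodular f)
    (T : Finset V) (p : ℝ) (hp : p ∈ Set.Icc (0 : ℝ) 1)
    {Ω : Type*} [Fintype Ω] (μ : Ω → ℝ) (hμ0 : ∀ ω, 0 ≤ μ ω) (hμ1 : ∑ ω, μ ω = 1)
    (S : Ω → Finset V)
    (hmarg : ∀ v : V, ∑ ω ∈ Finset.univ.filter (fun ω => v ∈ S ω), μ ω ≤ p) :
    (1 - p) * f T ≤ ∑ ω, μ ω * f (S ω ∪ T) := by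
  classical
  set g : Finset V → ℝ := fun A => f (A ∪ T) with hg
  have hgnn : ∀ A : Finset V, 0 ≤ g A := fun A => hnn _
  have hgsub : Submodular g := by
    intro A B
    have h1 : (A ∪ B) ∪ T = (A ∪ T) ∪ (B ∪ T) := by
      ext x; simp only [Finset.mem_union]; tauto
    have h2 : (A ∩ B) ∪ T = (A ∪ T) ∩ (B ∪ T) := by
      ext x; simp only [Finset.mem_union, Finset.mem_inter]; tauto
    show f ((A ∪ B) ∪ T) + f ((A ∩ B) ∪ T) ≤ f (A ∪ T) + f (B ∪ T)
    rw [h1, h2]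
    exact hsub (A ∪ T) (B ∪ T)
  have hge : g ∅ = f T := by show f (∅ ∪ T) = f T; rw [Finset.empty_union]
  show (1 - p) * f T ≤ ∑ ω, μ ω * g (S ω)
  rw [← hge]
  refine le_of_forall_pos_le_add fun ε hε => ?_
  set m : ℕ := Fintype.card Ω with hm
  obtain ⟨D, hD⟩ := exists_nat_gt (max 1 ((m : ℝ) * g ∅ / ε))
  have hD1 : (1:ℝ) ≤ D := le_of_lt (lt_of_le_of_lt (le_max_left _ _) hD)
  have hD0 : (0:ℝ) < D := lt_of_lt_of_le one_pos hD1
  set k : Ω → ℕ := fun ω => ⌊μ ω * D⌋₊ with hk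
  set P : ℕ := ⌊p * D⌋₊ with hP
  set L : Multiset (Finset V) :=
    (Finset.univ.val : Multiset Ω).bind (fun ω => Multiset.replicate (k ω) (S ω)) with hL
  have hcard : Multiset.card L = ∑ ω, k ω := by
    simp [hL, Multiset.card_bind, Function.comp_def]
  have hsum : (L.map g).sum = ∑ ω, (k ω : ℝ) * g (S ω) := by
    simp [hL, Multiset.map_bind, Multiset.sum_bind, Multiset.map_replicate,
      Multiset.sum_replicate, nsmul_eq_mul]
  have hfilt : ∀ v : V, Multiset.card (L.filter fun A => v ∈ A)
      = ∑ ω ∈ Finset.univ.filter (fun ω => v ∈ S ω), k ω := by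
    intro v
    rw [hL, card_filter_bind]
    rw [Finset.sum_filter]
    show ∑ a : Ω, Multiset.card (Multiset.filter (fun A => v ∈ A) (Multiset.replicate (k a) (S a)))
      = ∑ a : Ω, if v ∈ S a then k a else 0
    refine Finset.sum_congr rfl fun a _ => ?_
    by_cases h : v ∈ S a
    · rw [Multiset.filter_eq_self.mpr]
      · simp [h]
      · intro b hb; rwa [Multiset.eq_of_mem_replicate hb]
    · rw [Multiset.filter_eq_nil.mpr]
      · simp [h]
      · intro b hb; rw [Multiset.eq_of_mem_replicate hb]; exact h
  have hkle : ∀ ω, (k ω : ℝ) ≤ μ ω * D := fun ω => Nat.floor_le (mul_nonneg (hμ0 ω) hD0.le)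
  have hcount : ∀ v : V, Multiset.card (L.filter fun A => v ∈ A) ≤ P := by
    intro v
    rw [hfilt v]
    apply Nat.le_floor
    push_cast
    calc ∑ ω ∈ Finset.univ.filter (fun ω => v ∈ S ω), (k ω : ℝ)
        ≤ ∑ ω ∈ Finset.univ.filter (fun ω => v ∈ S ω), μ ω * D :=
          Finset.sum_le_sum fun ω _ => hkle ω
      _ = (∑ ω ∈ Finset.univ.filter (fun ω => v ∈ S ω), μ ω) * D := by
          rw [Finset.sum_mul]
      _ ≤ p * D := mul_le_mul_of_nonneg_right (hmarg v) hD0.le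
  have hcore := core_multiset g hgnn hgsub P
    (Multiset.card L * (Fintype.card V ^ 2 + 1) - (L.map fun A => A.card ^ 2).sum)
    L le_rfl hcount
  have hkge : ∀ ω, μ ω * D - 1 ≤ (k ω : ℝ) := by
    intro ω
    have := Nat.lt_floor_add_one (μ ω * D)
    have hkk : (k ω : ℝ) = (⌊μ ω * D⌋₊ : ℝ) := by rw [hk]
    linarith [hkk ▸ this]
  have hcardge : (D:ℝ) - m ≤ (Multiset.card L : ℝ) := by
    rw [hcard]
    push_cast
    calc (D:ℝ) - m = ∑ ω : Ω, (μ ω * D - 1) := by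
          rw [Finset.sum_sub_distrib, ← Finset.sum_mul, hμ1]
          simp [hm, Finset.card_univ]
      _ ≤ ∑ ω : Ω, (k ω : ℝ) := Finset.sum_le_sum fun ω _ => hkge ω
  have hPle : (P:ℝ) ≤ p * D := Nat.floor_le (mul_nonneg hp.1 hD0.le)
  have hstep1 : (1/(D:ℝ)) * (L.map g).sum ≤ ∑ ω, μ ω * g (S ω) := by
    rw [hsum, Finset.mul_sum]
    refine Finset.sum_le_sum fun ω _ => ?_
    have h1 : (1/(D:ℝ)) * ((k ω:ℝ) * g (S ω)) = ((k ω:ℝ)/D) * g (S ω) := by ring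
    rw [h1]
    apply mul_le_mul_of_nonneg_right _ (hgnn _)
    rw [div_le_iff₀ hD0]
    calc (k ω : ℝ) ≤ μ ω * D := hkle ω
      _ = μ ω * D := rfl
  have hfinal : (1-p) * g ∅ - (m:ℝ) * g ∅ / D ≤ (1/(D:ℝ)) * (L.map g).sum := by
    have h3 : ((D:ℝ) - m - p * D) * g ∅ ≤ ((Multiset.card L : ℝ) - P) * g ∅ := by
      apply mul_le_mul_of_nonneg_right _ (hgnn ∅)
      linarith
    have h4 : ((D:ℝ) - m - p*D) * g ∅ ≤ (L.map g).sum := le_trans h3 hcore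
    have h5 : (1/(D:ℝ)) * (((D:ℝ) - m - p*D) * g ∅) ≤ (1/(D:ℝ)) * (L.map g).sum :=
      mul_le_mul_of_nonneg_left h4 (by positivity)
    calc (1-p) * g ∅ - (m:ℝ) * g ∅ / D
        = (1/(D:ℝ)) * (((D:ℝ) - m - p*D) * g ∅) := by
          field_simp
          ring
      _ ≤ (1/(D:ℝ)) * (L.map g).sum := h5
  have heps : (m:ℝ) * g ∅ / D ≤ ε := by
    rw [div_le_iff₀ hD0]
    have h6 : (m:ℝ) * g ∅ / ε < D := lt_of_le_of_lt (le_max_right 1 _) hD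
    rw [div_lt_iff₀ hε] at h6
    linarith
  linarith [hstep1, hfinal, heps]
end

section
/- Let v_1, …, v_n be an inductively k-independent ordering of a finite simple graph G with k ≥ 1, let w : V → ℝ_{≥0} be vertex weights, and let y : V → ℝ_{≥0} be a feasible dual solution, i.e., y_i + Σ_{v_j ∈ B_i} y_j ≥ w_i for every index i. Then every independent set T of G satisfies Σ_{v_i ∈ T} w_i ≤ k · Σ_{i=1}^n y_i. -/
open Finset

/-- Weak duality for the MWIS relaxation `Q_G`: a feasible dual `y` bounds the weight of every
independent set by `k` times the dual objective. -/
theorem mwis_weak_duality {n k : ℕ} (hk : 1 ≤ k)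
    (G : SimpleGraph (Fin n)) [DecidableRel G.Adj]
    (hG : InductivelyKIndep G k)
    (w y : Fin n → ℝ) (hw : ∀ i, 0 ≤ w i) (hy : ∀ i, 0 ≤ y i)
    (hfeas : ∀ i : Fin n, w i ≤ y i + ∑ j ∈ earlierNbrs G i, y j)
    (T : Finset (Fin n)) (hT : IsIndep G T) :
    ∑ i ∈ T, w i ≤ k * ∑ i, y i := by
  have key : ∀ j : Fin n,
      ((if j ∈ T then (1:ℝ) else 0) + (T.filter (fun i => j ∈ earlierNbrs G i)).card) ≤ k := by
    intro j
    by_cases hj : j ∈ T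
    · have hempty : T.filter (fun i => j ∈ earlierNbrs G i) = ∅ := by
        apply Finset.filter_eq_empty_iff.mpr
        intro i hi hij
        simp only [earlierNbrs, Finset.mem_filter, Finset.mem_univ, true_and] at hij
        exact hT i hi j hj hij.1
      simp only [hempty, hj, if_true, Finset.card_empty, Nat.cast_zero, add_zero]
      exact_mod_cast hk
    · have hsub : T.filter (fun i => j ∈ earlierNbrs G i) ⊆ laterNbrs G j := by
        intro i hi
        simp only [Finset.mem_filter, earlierNbrs, laterNbrs, Finset.mem_univ, true_and] at hi ⊢
        exact ⟨hi.2.1.symm, hi.2.2⟩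
      have hindep : IsIndep G (T.filter (fun i => j ∈ earlierNbrs G i)) := by
        intro u hu v hv
        exact hT u (Finset.mem_filter.mp hu).1 v (Finset.mem_filter.mp hv).1
      have hcard := hG j _ hsub hindep
      simp only [hj, if_false, zero_add]
      exact_mod_cast hcard
  calc ∑ i ∈ T, w i ≤ ∑ i ∈ T, (y i + ∑ j ∈ earlierNbrs G i, y j) :=
        Finset.sum_le_sum fun i _ => hfeas i
    _ = ∑ j, ((if j ∈ T then (1:ℝ) else 0) + (T.filter (fun i => j ∈ earlierNbrs G i)).card) * y j := by
        have h1 : ∑ x ∈ T, y x = ∑ j, (if j ∈ T then (1:ℝ) else 0) * y j := by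
          simp [ite_mul, Finset.sum_ite_mem, Finset.univ_inter]
        have h2 : ∑ x ∈ T, ∑ j ∈ earlierNbrs G x, y j
            = ∑ j, ((T.filter (fun i => j ∈ earlierNbrs G i)).card : ℝ) * y j := by
          calc ∑ x ∈ T, ∑ j ∈ earlierNbrs G x, y j
              = ∑ x ∈ T, ∑ j, if j ∈ earlierNbrs G x then y j else 0 := by
                simp [Finset.sum_ite_mem, Finset.univ_inter]
            _ = ∑ j, ∑ x ∈ T, if j ∈ earlierNbrs G x then y j else 0 := Finset.sum_comm
            _ = ∑ j, ((T.filter (fun i => j ∈ earlierNbrs G i)).card : ℝ) * y j := by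
                refine Finset.sum_congr rfl fun j _ => ?_
                rw [Finset.sum_ite, Finset.sum_const_zero, add_zero, Finset.sum_const,
                  nsmul_eq_mul]
        simp only [Finset.sum_add_distrib, add_mul, h1, h2]
    _ ≤ ∑ j, (k:ℝ) * y j :=
        Finset.sum_le_sum fun j _ => mul_le_mul_of_nonneg_right (key j) (hy j)
    _ = k * ∑ i, y i := by rw [← Finset.mul_sum]
end

section
/- Let v_1, …, v_n enumerate the vertices of a finite simple graph G, let w, y : V → ℝ_{≥0}, and let S = {v_i : y_i > 0}. Suppose the dual constraints are tight on S: y_i + Σ_{v_j ∈ B_i} y_j = w_i for every v_i ∈ S. Let S′ ⊆ S be a set such that for every v_{i′} ∈ S \ S′ there exists v_i ∈ S′ with i > i′ and v_{i′} ∈ N(v_i) (the property of the output of the second phase, which pops S in reverse insertion order keeping a maximal independent set). Then Σ_{v_i ∈ S′} w_i ≥ Σ_{i=1}^n y_i. -/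
open Finset

private lemma sum_biUnion_le_of_nonneg {α β : Type*} [DecidableEq α] [DecidableEq β]
    (s : Finset α) (t : α → Finset β) (f : β → ℝ)
    (hf : ∀ b, 0 ≤ f b) : ∑ b ∈ s.biUnion t, f b ≤ ∑ a ∈ s, ∑ b ∈ t a, f b := by
  induction s using Finset.induction with
  | empty => simp
  | insert a s h ih =>
    rw [Finset.biUnion_insert, Finset.sum_insert h]
    calc ∑ b ∈ t a ∪ s.biUnion t, f b
        ≤ ∑ b ∈ t a, f b + ∑ b ∈ s.biUnion t, f b := by
          have := Finset.sum_union_inter (s₁ := t a) (s₂ := s.biUnion t) (f := f)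
          have h2 : 0 ≤ ∑ b ∈ t a ∩ s.biUnion t, f b := Finset.sum_nonneg fun b _ => hf b
          linarith
      _ ≤ _ := by linarith

/-- Lemma `weights>duals`: if the dual constraints are tight on `S = {vᵢ : yᵢ > 0}` and `S'`
has the pop property of the second phase, then `∑_{vᵢ ∈ S'} wᵢ ≥ ∑ᵢ yᵢ`. -/
theorem output_weight_ge_duals {n : ℕ}
    (G : SimpleGraph (Fin n)) [DecidableRel G.Adj]
    (w y : Fin n → ℝ) (hw : ∀ i, 0 ≤ w i) (hy : ∀ i, 0 ≤ y i)
    (S : Finset (Fin n)) (hSdef : ∀ i : Fin n, i ∈ S ↔ 0 < y i)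
    (htight : ∀ i ∈ S, y i + ∑ j ∈ earlierNbrs G i, y j = w i)
    (S' : Finset (Fin n)) (hS'sub : S' ⊆ S)
    (hpop : ∀ i' ∈ S \ S', ∃ i ∈ S', i' < i ∧ G.Adj i i') :
    ∑ i, y i ≤ ∑ i ∈ S', w i := by
  classical
  -- y vanishes outside S
  have hy0 : ∀ i, i ∉ S → y i = 0 := fun i hi => le_antisymm (by
    by_contra h
    exact hi ((hSdef i).2 (lt_of_le_of_ne (hy i) (fun e => h (e ▸ le_refl 0))))) (hy i)
  have h1 : ∑ i, y i = ∑ i ∈ S, y i :=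
    (Finset.sum_subset (Finset.subset_univ S) (fun i _ hi => hy0 i hi)).symm
  have h2 : ∑ i ∈ S, y i = ∑ i ∈ S', y i + ∑ i ∈ S \ S', y i := by
    rw [add_comm, Finset.sum_sdiff hS'sub]
  have hsub : S \ S' ⊆ S'.biUnion (earlierNbrs G) := by
    intro i' hi'
    obtain ⟨i, hiS', hlt, hadj⟩ := hpop i' hi'
    exact Finset.mem_biUnion.2 ⟨i, hiS', by
      simp [earlierNbrs, hadj, hlt]⟩
  have h3 : ∑ i ∈ S \ S', y i ≤ ∑ i ∈ S', ∑ j ∈ earlierNbrs G i, y j :=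
    le_trans (Finset.sum_le_sum_of_subset_of_nonneg hsub (fun i _ _ => hy i))
      (sum_biUnion_le_of_nonneg S' _ y hy)
  have h4 : ∑ i ∈ S', w i = ∑ i ∈ S', (y i + ∑ j ∈ earlierNbrs G i, y j) :=
    Finset.sum_congr rfl (fun i hi => (htight i (hS'sub hi)).symm)
  rw [h1, h2, h4, Finset.sum_add_distrib]
  linarith
end

section
/- Let v_1, …, v_n be an inductively k-independent ordering of a finite simple graph G with k ≥ 1 and let w : V → ℝ_{≥0} be vertex weights. Suppose y : V → ℝ_{≥0} satisfies y_i + Σ_{v_j ∈ B_i} y_j ≥ w_i for every index i, with equality for every v_i ∈ S where S = {v_i : y_i > 0}, and let S′ ⊆ S be an independent set such that every v_{i′} ∈ S \ S′ has a neighbor v_i ∈ S′ with i > i′. Then every independent set T of G satisfies Σ_{v_i ∈ T} w_i ≤ k · Σ_{v_i ∈ S′} w_i; that is, the primal-dual algorithm's output S′ is a 1/k-approximation for maximum weight independent set. -/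
open Finset

/-- The two-phase primal-dual algorithm for MWIS in inductively `k`-independent graphs is a
`1/k`-approximation: under the invariants maintained by the algorithm, every independent set
`T` satisfies `∑_{vᵢ ∈ T} wᵢ ≤ k ∑_{vᵢ ∈ S'} wᵢ`. -/
theorem primal_dual_mwis_approximation {n k : ℕ} (hk : 1 ≤ k)
    (G : SimpleGraph (Fin n)) [DecidableRel G.Adj]
    (hG : InductivelyKIndep G k)
    (w y : Fin n → ℝ) (hw : ∀ i, 0 ≤ w i) (hy : ∀ i, 0 ≤ y i)
    (hfeas : ∀ i : Fin n, w i ≤ y i + ∑ j ∈ earlierNbrs G i, y j)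
    (S : Finset (Fin n)) (hSdef : ∀ i : Fin n, i ∈ S ↔ 0 < y i)
    (htight : ∀ i ∈ S, y i + ∑ j ∈ earlierNbrs G i, y j = w i)
    (S' : Finset (Fin n)) (hS'sub : S' ⊆ S) (hS'ind : IsIndep G S')
    (hpop : ∀ i' ∈ S \ S', ∃ i ∈ S', i' < i ∧ G.Adj i i')
    (T : Finset (Fin n)) (hT : IsIndep G T) :
    ∑ i ∈ T, w i ≤ k * ∑ i ∈ S', w i := by
  classical
  have hB : ∀ i j : Fin n, j ∈ earlierNbrs G i ↔ G.Adj i j ∧ j < i := by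
    intro i j; simp [earlierNbrs]
  set F : Finset (Fin n) → Fin n → ℕ :=
    fun U j => (U.filter (fun i => j ∈ earlierNbrs G i)).card with hF
  have key : ∀ (U : Finset (Fin n)), ∑ i ∈ U, (y i + ∑ j ∈ earlierNbrs G i, y j)
      = ∑ j : Fin n, ((if j ∈ U then y j else 0) + (F U j : ℝ) * y j) := by
    intro U
    rw [Finset.sum_add_distrib, Finset.sum_add_distrib]
    congr 1
    · rw [Finset.sum_ite_mem, Finset.univ_inter]
    · have : ∀ i ∈ U, ∑ j ∈ earlierNbrs G i, y j
          = ∑ j : Fin n, if j ∈ earlierNbrs G i then y j else 0 := by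
        intro i _
        rw [Finset.sum_ite_mem, Finset.univ_inter]
      rw [Finset.sum_congr rfl this, Finset.sum_comm]
      refine Finset.sum_congr rfl fun j _ => ?_
      rw [← Finset.sum_filter, Finset.sum_const, hF, nsmul_eq_mul]
  -- Step 1: bound ∑_{i∈T} w i by k * ∑_j y j
  have step1 : ∑ i ∈ T, w i ≤ (k : ℝ) * ∑ j : Fin n, y j := by
    calc ∑ i ∈ T, w i ≤ ∑ i ∈ T, (y i + ∑ j ∈ earlierNbrs G i, y j) :=
          Finset.sum_le_sum (fun i _ => hfeas i)
      _ = ∑ j : Fin n, ((if j ∈ T then y j else 0) + (F T j : ℝ) * y j) := key T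
      _ ≤ ∑ j : Fin n, (k : ℝ) * y j := by
          refine Finset.sum_le_sum fun j _ => ?_
          by_cases hjT : j ∈ T
          · have hF0 : F T j = 0 := by
              rw [hF, Finset.card_eq_zero, Finset.filter_eq_empty_iff]
              intro i hi hji
              exact hT i hi j hjT ((hB i j).1 hji).1
            simp only [hjT, if_pos, hF0, Nat.cast_zero, zero_mul, add_zero]
            nlinarith [hy j, (Nat.one_le_cast (α := ℝ)).2 hk]
          · have hsub : T.filter (fun i => j ∈ earlierNbrs G i) ⊆ laterNbrs G j := by
              intro i hi
              rw [Finset.mem_filter] at hi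
              obtain ⟨hadj, hlt⟩ := (hB i j).1 hi.2
              simp only [laterNbrs, Finset.mem_filter, Finset.mem_univ, true_and]
              exact ⟨hadj.symm, hlt⟩
            have hind : IsIndep G (T.filter (fun i => j ∈ earlierNbrs G i)) := by
              intro u hu v hv
              rw [Finset.mem_filter] at hu hv
              exact hT u hu.1 v hv.1
            have hcard : F T j ≤ k := hG j _ hsub hind
            simp only [hjT, if_neg, not_false_iff, zero_add]
            exact mul_le_mul_of_nonneg_right (by exact_mod_cast hcard) (hy j)
      _ = (k : ℝ) * ∑ j : Fin n, y j := by rw [Finset.mul_sum]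
  -- Step 2: ∑_j y j ≤ ∑_{i∈S'} w i
  have step2 : ∑ j : Fin n, y j ≤ ∑ i ∈ S', w i := by
    have htight' : ∑ i ∈ S', w i = ∑ i ∈ S', (y i + ∑ j ∈ earlierNbrs G i, y j) :=
      (Finset.sum_congr rfl fun i hi => (htight i (hS'sub hi)).symm)
    rw [htight', key S']
    refine Finset.sum_le_sum fun j _ => ?_
    by_cases hyj : 0 < y j
    · have hjS : j ∈ S := (hSdef j).2 hyj
      by_cases hjS' : j ∈ S'
      · simp only [hjS', if_pos]
        nlinarith [hy j, Nat.cast_nonneg (α := ℝ) (F S' j)]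
      · obtain ⟨i, hiS', hlt, hadj⟩ := hpop j (Finset.mem_sdiff.2 ⟨hjS, hjS'⟩)
        have hmem : i ∈ S'.filter (fun i => j ∈ earlierNbrs G i) := by
          rw [Finset.mem_filter]
          exact ⟨hiS', (hB i j).2 ⟨hadj, hlt⟩⟩
        have h1 : 1 ≤ F S' j := Finset.card_pos.2 ⟨i, hmem⟩
        have : (1 : ℝ) ≤ (F S' j : ℝ) := by exact_mod_cast h1
        simp only [hjS', if_neg, not_false_iff, zero_add]
        nlinarith
    · have : y j = 0 := le_antisymm (not_lt.1 hyj) (hy j)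
      rw [this]
      positivity
  calc ∑ i ∈ T, w i ≤ (k : ℝ) * ∑ j : Fin n, y j := step1
    _ ≤ (k : ℝ) * ∑ i ∈ S', w i :=
        mul_le_mul_of_nonneg_left step2 (Nat.cast_nonneg k)
end

section
/- Consider a run of the preemptive greedy algorithm with parameter β > 0 on a finite simple graph G with vertex enumeration v_1, …, v_n and a monotone, normalized, submodular function f, producing the sets S_0, …, S_n, the set U of all elements ever added, and exit values χ. Then Σ_{u ∈ U \ S_n} χ(u) ≤ (1/β) · f(S_n). -/
open Finset

/-- The conflict set `C_i = N(v_i) ∩ S` of vertex `i` against the current set `S`. -/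
def conflictSet {n : ℕ} (G : SimpleGraph (Fin n)) [DecidableRel G.Adj] (i : Fin n)
    (S : Finset (Fin n)) : Finset (Fin n) :=
  S.filter (fun u => G.Adj i u)

/-- Step `i` of the preemptive greedy algorithm with parameter `β` is accepted:
`f_{S_{i-1}}(v_i) ≥ (1+β) ∑_{c ∈ C_i} ν_f(S_{i-1}, c)`, where `S_{i-1} = S i.val`. -/
def AcceptedStep {n : ℕ} (G : SimpleGraph (Fin n)) [DecidableRel G.Adj]
    (f : Finset (Fin n) → ℝ) (β : ℝ) (S : ℕ → Finset (Fin n)) (i : Fin n) : Prop :=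
  (1 + β) * ∑ c ∈ conflictSet G i (S i.val), incv f (S i.val) c ≤
    f (insert i (S i.val)) - f (S i.val)

/-- `S : ℕ → Finset (Fin n)` is a run of the preemptive greedy algorithm with parameter `β`:
`S 0 = ∅`, and at each step `i` the vertex `v_i` is accepted (replacing its conflict set) iff
its marginal value is at least `(1+β)` times the total incremental value of its conflicts. -/
def IsGreedyRun {n : ℕ} (G : SimpleGraph (Fin n)) [DecidableRel G.Adj]
    (f : Finset (Fin n) → ℝ) (β : ℝ) (S : ℕ → Finset (Fin n)) : Prop :=
  S 0 = ∅ ∧ ∀ i : Fin n,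
    (AcceptedStep G f β S i →
      S (i.val + 1) = (S i.val \ conflictSet G i (S i.val)) ∪ {i}) ∧
    (¬ AcceptedStep G f β S i → S (i.val + 1) = S i.val)

/-- `U`: the set of all elements ever (even momentarily) added to the current set. -/
def everAdded {n : ℕ} (S : ℕ → Finset (Fin n)) : Finset (Fin n) :=
  (Finset.range (n + 1)).biUnion S


section AuxLemmas

variable {n : ℕ} (f : Finset (Fin n) → ℝ)

lemma incv_eq (S : Finset (Fin n)) (e : Fin n) :
    incv f S e = f (insert e (S.filter (fun s => s < e))) - f (S.filter (fun s => s < e)) := by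
  unfold incv; congr!

lemma sum_incv_eq (hnorm : f ∅ = 0) : ∀ T : Finset (Fin n), ∑ u ∈ T, incv f T u = f T := by
  intro T
  induction T using Finset.strongInduction with
  | _ T ih =>
    rcases T.eq_empty_or_nonempty with rfl | hT
    · simpa using hnorm.symm
    · have hMT : T.max' hT ∈ T := T.max'_mem hT
      set M := T.max' hT with hM
      have hfe : T.filter (fun s => s < M) = T.erase M := by
        ext s
        simp only [mem_filter, mem_erase]
        constructor
        · rintro ⟨hs, hlt⟩; exact ⟨ne_of_lt hlt, hs⟩
        · rintro ⟨hne, hs⟩; exact ⟨hs, lt_of_le_of_ne (T.le_max' s hs) hne⟩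
      have hMi : incv f T M = f T - f (T.erase M) := by
        rw [incv_eq, hfe, Finset.insert_erase hMT]
      have hrest : ∀ u ∈ T.erase M, incv f T u = incv f (T.erase M) u := by
        intro u hu
        have huM : u < M := lt_of_le_of_ne (T.le_max' u (mem_of_mem_erase hu)) (ne_of_mem_erase hu)
        have he : (T.erase M).filter (fun s => s < u) = T.filter (fun s => s < u) := by
          ext s
          simp only [mem_filter, mem_erase]
          constructor
          · rintro ⟨⟨_, hs⟩, hlt⟩; exact ⟨hs, hlt⟩
          · rintro ⟨hs, hlt⟩; exact ⟨⟨ne_of_lt (lt_trans hlt huM), hs⟩, hlt⟩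
        rw [incv_eq, incv_eq, he]
      have hss : T.erase M ⊂ T := Finset.erase_ssubset hMT
      calc ∑ u ∈ T, incv f T u
          = incv f T M + ∑ u ∈ T.erase M, incv f T u := (Finset.add_sum_erase T _ hMT).symm
        _ = incv f T M + ∑ u ∈ T.erase M, incv f (T.erase M) u := by
            rw [Finset.sum_congr rfl hrest]
        _ = (f T - f (T.erase M)) + f (T.erase M) := by rw [hMi, ih _ hss]
        _ = f T := by ring

lemma marg_mono (hsub : Submodular f) {A B : Finset (Fin n)} (hAB : A ⊆ B) {x : Fin n}
    (hx : x ∉ B) : f (insert x B) - f B ≤ f (insert x A) - f A := by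
  have h := hsub (insert x A) B
  rw [Finset.insert_union, Finset.union_eq_right.mpr hAB,
    Finset.insert_inter_of_notMem hx, Finset.inter_eq_left.mpr hAB] at h
  linarith

lemma incv_mono (hsub : Submodular f) {T' T : Finset (Fin n)} (h : T' ⊆ T) (u : Fin n) :
    incv f T u ≤ incv f T' u := by
  have hx : u ∉ T.filter (fun s => s < u) := by simp
  rw [incv_eq, incv_eq]
  exact marg_mono f hsub (Finset.filter_subset_filter _ h) hx

lemma f_sdiff (hsub : Submodular f) (hnorm : f ∅ = 0) {T C : Finset (Fin n)} (hC : C ⊆ T) :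
    f T - ∑ c ∈ C, incv f T c ≤ f (T \ C) := by
  have h1 : f (T \ C) = ∑ u ∈ T \ C, incv f (T \ C) u := (sum_incv_eq f hnorm _).symm
  have h2 : ∑ u ∈ T \ C, incv f T u ≤ ∑ u ∈ T \ C, incv f (T \ C) u :=
    Finset.sum_le_sum fun u _ => incv_mono f hsub Finset.sdiff_subset u
  have h3 : ∑ u ∈ T \ C, incv f T u + ∑ c ∈ C, incv f T c = f T := by
    rw [Finset.sum_sdiff hC, sum_incv_eq f hnorm]
  linarith

variable (G : SimpleGraph (Fin n)) [DecidableRel G.Adj] (β : ℝ) (S : ℕ → Finset (Fin n))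

lemma run_mem_lt (hrun : IsGreedyRun G f β S) :
    ∀ m ≤ n, ∀ u ∈ S m, (u : ℕ) < m := by
  intro m
  induction m with
  | zero => intro _ u hu; rw [hrun.1] at hu; simp at hu
  | succ m ih =>
    intro hm u hu
    have hmn : m < n := hm
    have hstep := hrun.2 ⟨m, hmn⟩
    by_cases hacc : AcceptedStep G f β S ⟨m, hmn⟩
    · rw [hstep.1 hacc] at hu
      rcases Finset.mem_union.mp hu with h | h
      · exact Nat.lt_succ_of_lt (ih (le_of_lt hmn) u (Finset.mem_sdiff.mp h).1)
      · have : u = ⟨m, hmn⟩ := Finset.mem_singleton.mp h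
        simp [this]
    · rw [hstep.2 hacc] at hu
      exact Nat.lt_succ_of_lt (ih (le_of_lt hmn) u hu)

lemma run_no_return (hrun : IsGreedyRun G f β S) {u : Fin n} {m : ℕ}
    (hm : (u : ℕ) < m) (hu : u ∉ S m) :
    ∀ m', m ≤ m' → m' ≤ n → u ∉ S m' := by
  intro m' hmm'
  induction m', hmm' using Nat.le_induction with
  | base => intro _; exact hu
  | succ m' hmm' ih =>
    intro hm'n
    have hmn' : m' < n := hm'n
    have ihm := ih (le_of_lt hmn')
    have hstep := hrun.2 ⟨m', hmn'⟩
    by_cases hacc : AcceptedStep G f β S ⟨m', hmn'⟩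
    · rw [hstep.1 hacc]
      intro hcon
      rcases Finset.mem_union.mp hcon with h | h
      · exact ihm (Finset.mem_sdiff.mp h).1
      · have : u = ⟨m', hmn'⟩ := Finset.mem_singleton.mp h
        have : (u : ℕ) = m' := by rw [this]
        omega
    · rw [hstep.2 hacc]; exact ihm

lemma run_step_accepted (hsub : Submodular f) (hnorm : f ∅ = 0)
    (hrun : IsGreedyRun G f β S) (i : Fin n) (hin : (i : ℕ) ≤ n)
    (hacc : AcceptedStep G f β S i) :
    f (S i.val) + β * ∑ c ∈ conflictSet G i (S i.val), incv f (S i.val) c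
      ≤ f (S (i.val + 1)) := by
  set T := S i.val with hT
  set C := conflictSet G i T with hCdef
  have hC : C ⊆ T := Finset.filter_subset _ _
  have hiT : i ∉ T := by
    intro h
    exact absurd (run_mem_lt f G β S hrun i.val hin i h) (lt_irrefl _)
  have hS1 : S (i.val + 1) = (T \ C) ∪ {i} := (hrun.2 i).1 hacc
  have hins : (T \ C) ∪ {i} = insert i (T \ C) := by
    rw [Finset.union_comm, Finset.insert_eq]
  have h2 : f (insert i T) - f T ≤ f (insert i (T \ C)) - f (T \ C) :=
    marg_mono f hsub Finset.sdiff_subset hiT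
  have h3 : f T - ∑ c ∈ C, incv f T c ≤ f (T \ C) := f_sdiff f hsub hnorm hC
  have h4 : (1 + β) * ∑ c ∈ C, incv f T c ≤ f (insert i T) - f T := hacc
  rw [hS1, hins]
  linarith

end AuxLemmas

/-- Lemma `exit-values-upper-bound`: the total exit value of evicted elements is at most
`(1/β) f(S_n)`. Here `χ` assigns to each evicted element its incremental value just before
removal. -/
theorem exit_values_upper_bound {n : ℕ}
    (G : SimpleGraph (Fin n)) [DecidableRel G.Adj]
    (f : Finset (Fin n) → ℝ) (hsub : Submodular f)
    (hmono : ∀ A B : Finset (Fin n), A ⊆ B → f A ≤ f B) (hnorm : f ∅ = 0)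
    (β : ℝ) (hβ : 0 < β)
    (S : ℕ → Finset (Fin n)) (hrun : IsGreedyRun G f β S)
    (χ : Fin n → ℝ)
    (hχ : ∀ i : Fin n, AcceptedStep G f β S i →
      ∀ u ∈ conflictSet G i (S i.val), χ u = incv f (S i.val) u) :
    ∑ u ∈ everAdded S \ S n, χ u ≤ (1 / β) * f (S n) := by
  classical
  set T : Fin n → ℝ := fun i =>
    if AcceptedStep G f β S i then ∑ c ∈ conflictSet G i (S i.val), incv f (S i.val) c else 0
    with hTdef
  set E : Fin n → Finset (Fin n) := fun i =>
    if AcceptedStep G f β S i then conflictSet G i (S i.val) else ∅ with hEdef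
  have hEmem : ∀ i : Fin n, ∀ u ∈ E i,
      AcceptedStep G f β S i ∧ u ∈ conflictSet G i (S i.val) := by
    intro i u hu
    by_cases hacc : AcceptedStep G f β S i
    · refine ⟨hacc, ?_⟩
      simpa [hEdef, if_pos hacc] using hu
    · simp [hEdef, if_neg hacc] at hu
  have hEout : ∀ i : Fin n, ∀ u ∈ E i, ∀ m, i.val < m → m ≤ n → u ∉ S m := by
    intro i u hu m him hmn
    obtain ⟨hacc, huC⟩ := hEmem i u hu
    have huS : u ∈ S i.val := (Finset.mem_filter.mp huC).1
    have hulti : (u : ℕ) < i.val :=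
      run_mem_lt f G β S hrun i.val (le_of_lt i.isLt) u huS
    have hune : u ≠ i := by
      intro h; rw [h] at hulti; exact lt_irrefl _ hulti
    have hnot1 : u ∉ S (i.val + 1) := by
      rw [(hrun.2 i).1 hacc]
      intro hcon
      rcases Finset.mem_union.mp hcon with h | h
      · exact (Finset.mem_sdiff.mp h).2 huC
      · exact hune (Finset.mem_singleton.mp h)
    exact run_no_return f G β S hrun (Nat.lt_succ_of_lt hulti) hnot1 m him hmn
  have hdisj : ∀ i j : Fin n, i < j → ∀ u ∈ E i, u ∉ E j := by
    intro i j hij u hui huj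
    obtain ⟨_, hCj⟩ := hEmem j u huj
    exact hEout i u hui j.val hij (le_of_lt j.isLt) (Finset.mem_filter.mp hCj).1
  have hfind : ∀ (u : Fin n) (k m : ℕ), m + k = n → u ∈ S m → u ∉ S n →
      ∃ m', m ≤ m' ∧ m' < n ∧ u ∈ S m' ∧ u ∉ S (m' + 1) := by
    intro u k
    induction k with
    | zero =>
      intro m hmk hu hun
      rw [Nat.add_zero] at hmk
      subst hmk
      exact absurd hu hun
    | succ k ih =>
      intro m hmk hu hun
      by_cases h1 : u ∈ S (m + 1)
      · obtain ⟨m', h2, h3, h4, h5⟩ := ih (m + 1) (by omega) h1 hun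
        exact ⟨m', by omega, h3, h4, h5⟩
      · exact ⟨m, le_refl m, by omega, hu, h1⟩
  have hpart : everAdded S \ S n = Finset.univ.biUnion E := by
    ext u
    simp only [Finset.mem_sdiff, everAdded, Finset.mem_biUnion, Finset.mem_range,
      Finset.mem_univ, true_and]
    constructor
    · rintro ⟨⟨m, hm, hu⟩, hun⟩
      have hmn : m ≤ n := Nat.lt_succ_iff.mp hm
      obtain ⟨m', hmm', hm'n, hu', hnot⟩ := hfind u (n - m) m (by omega) hu hun
      refine ⟨⟨m', hm'n⟩, ?_⟩
      set i : Fin n := ⟨m', hm'n⟩ with hi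
      have hacc : AcceptedStep G f β S i := by
        by_contra hacc
        rw [(hrun.2 i).2 hacc] at hnot
        exact hnot hu'
      have huC : u ∈ conflictSet G i (S i.val) := by
        by_contra hC
        apply hnot
        rw [(hrun.2 i).1 hacc]
        exact Finset.mem_union_left _ (Finset.mem_sdiff.mpr ⟨hu', hC⟩)
      simpa [hEdef, if_pos hacc] using huC
    · rintro ⟨i, hui⟩
      obtain ⟨hacc, huC⟩ := hEmem i u hui
      refine ⟨⟨i.val, Nat.lt_succ_of_lt i.isLt, (Finset.mem_filter.mp huC).1⟩, ?_⟩
      exact hEout i u hui n i.isLt le_rfl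
  have key : ∀ m, m ≤ n →
      β * ∑ i ∈ Finset.univ.filter (fun i : Fin n => i.val < m), T i ≤ f (S m) := by
    intro m
    induction m with
    | zero =>
      intro _
      have : Finset.univ.filter (fun i : Fin n => i.val < 0) = ∅ := by
        apply Finset.filter_false_of_mem; intro i _; omega
      rw [this, Finset.sum_empty, mul_zero, hrun.1, hnorm]
    | succ m ih =>
      intro hm
      have hmn : m < n := hm
      set i : Fin n := ⟨m, hmn⟩ with hi
      have hfil : Finset.univ.filter (fun j : Fin n => j.val < m + 1)
          = insert i (Finset.univ.filter (fun j : Fin n => j.val < m)) := by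
        ext j
        simp only [Finset.mem_filter, Finset.mem_univ, true_and, Finset.mem_insert,
          Fin.ext_iff, hi]
        omega
      have hnotmem : i ∉ Finset.univ.filter (fun j : Fin n => j.val < m) := by
        simp [hi]
      have ihm := ih (le_of_lt hmn)
      rw [hfil, Finset.sum_insert hnotmem, mul_add]
      by_cases hacc : AcceptedStep G f β S i
      · have hTi : T i = ∑ c ∈ conflictSet G i (S i.val), incv f (S i.val) c := by
          simp only [hTdef, if_pos hacc]
        have hst := run_step_accepted f G β S hsub hnorm hrun i (le_of_lt hmn) hacc
        have hiv : (i : ℕ) = m := rfl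
        rw [hiv] at hst hTi
        rw [hTi]
        linarith
      · have hTi : T i = 0 := by simp only [hTdef, if_neg hacc]
        have hS1 : S (m + 1) = S m := (hrun.2 i).2 hacc
        rw [hTi, hS1, mul_zero, zero_add]
        exact ihm
  have hfn : β * ∑ i : Fin n, T i ≤ f (S n) := by
    have h := key n le_rfl
    have hfil : Finset.univ.filter (fun i : Fin n => i.val < n) = Finset.univ := by
      apply Finset.filter_true_of_mem; intro i _; exact i.isLt
    rwa [hfil] at h
  have hsum : ∑ u ∈ everAdded S \ S n, χ u = ∑ i : Fin n, T i := by
    rw [hpart, Finset.sum_biUnion]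
    · apply Finset.sum_congr rfl
      intro i _
      by_cases hacc : AcceptedStep G f β S i
      · have hE : E i = conflictSet G i (S i.val) := by simp only [hEdef, if_pos hacc]
        have hT : T i = ∑ c ∈ conflictSet G i (S i.val), incv f (S i.val) c := by
          simp only [hTdef, if_pos hacc]
        rw [hE, hT]
        exact Finset.sum_congr rfl (fun u hu => hχ i hacc u hu)
      · simp [hEdef, hTdef, if_neg hacc]
    · intro i _ j _ hij
      show Disjoint (E i) (E j)
      rw [Finset.disjoint_left]
      intro u hui huj
      rcases lt_or_gt_of_ne hij with h | h
      · exact hdisj i j h u hui huj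
      · exact hdisj j i h u huj hui
  rw [hsum]
  rw [div_mul_eq_mul_div, one_mul, le_div_iff₀ hβ, mul_comm]
  exact hfn
end

section
/- Consider a run of the preemptive greedy algorithm with parameter β > 0 on a finite simple graph G with vertex enumeration v_1, …, v_n and a monotone, normalized, submodular function f, producing the sets S_0, …, S_n and the set U of all elements ever added. Then f(U) ≤ (1 + 1/β) · f(S_n). -/
open Finset

section MyHelpers

variable {V : Type*}

lemma my_marginal_antitone [DecidableEq V] {f : Finset V → ℝ} (hsub : Submodular f)
    (hmono : ∀ A B : Finset V, A ⊆ B → f A ≤ f B)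
    {A B : Finset V} (hAB : A ⊆ B) (c : V) :
    f (insert c B) - f B ≤ f (insert c A) - f A := by
  have h := hsub (insert c A) B
  rw [Finset.insert_union, Finset.union_eq_right.mpr hAB] at h
  have h2 : f A ≤ f (insert c A ∩ B) :=
    hmono _ _ (Finset.subset_inter (Finset.subset_insert c A) hAB)
  linarith

lemma my_incv_nonneg [LinearOrder V] {f : Finset V → ℝ}
    (hmono : ∀ A B : Finset V, A ⊆ B → f A ≤ f B) (S : Finset V) (c : V) :
    0 ≤ incv f S c := by
  have := hmono _ _ (Finset.subset_insert c (S.filter (fun s => s < c)))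
  simp only [incv]
  linarith

lemma my_incv_le [LinearOrder V] {f : Finset V → ℝ} (hsub : Submodular f)
    (hmono : ∀ A B : Finset V, A ⊆ B → f A ≤ f B) {S T : Finset V} {c : V}
    (h : S.filter (fun s => s < c) ⊆ T.filter (fun s => s < c)) :
    incv f T c ≤ incv f S c :=
  my_marginal_antitone hsub hmono h c

lemma my_sum_incv [LinearOrder V] {f : Finset V → ℝ} (hnorm : f ∅ = 0) :
    ∀ T : Finset V, ∑ c ∈ T, incv f T c = f T := by
  intro T
  induction T using Finset.strongInduction with
  | _ T ih =>
    rcases T.eq_empty_or_nonempty with rfl | hT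
    · simp [hnorm]
    · set m := T.max' hT with hm
      have hmem : m ∈ T := T.max'_mem hT
      have hfilt : T.filter (fun s => s < m) = T.erase m := by
        ext x
        simp only [Finset.mem_filter, Finset.mem_erase]
        constructor
        · rintro ⟨hx, hlt⟩; exact ⟨ne_of_lt hlt, hx⟩
        · rintro ⟨hne, hx⟩; exact ⟨hx, lt_of_le_of_ne (T.le_max' x hx) hne⟩
      have key : ∀ c ∈ T.erase m, incv f T c = incv f (T.erase m) c := by
        intro c hc
        have hfe : T.filter (fun s => s < c) = (T.erase m).filter (fun s => s < c) := by
          ext x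
          simp only [Finset.mem_filter, Finset.mem_erase]
          constructor
          · rintro ⟨hx, hlt⟩
            refine ⟨⟨?_, hx⟩, hlt⟩
            rintro rfl
            exact absurd hlt (not_lt.2 (T.le_max' c (Finset.mem_of_mem_erase hc)))
          · rintro ⟨⟨_, hx⟩, hlt⟩; exact ⟨hx, hlt⟩
        simp [incv, hfe]
      have hsplit : ∑ c ∈ T, incv f T c = incv f T m + ∑ c ∈ T.erase m, incv f T c := by
        rw [← Finset.sum_erase_add T _ hmem]; ring
      rw [hsplit, Finset.sum_congr rfl key, ih (T.erase m) (Finset.erase_ssubset hmem)]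
      have hm2 : incv f T m = f T - f (T.erase m) := by
        rw [incv, hfilt, Finset.insert_erase hmem]
      rw [hm2]; ring

lemma my_sum_biUnion_le {α : Type*} [DecidableEq α] (s : Finset α) (t : α → Finset α)
    (g : α → ℝ) (hg : ∀ x, 0 ≤ g x) :
    ∑ x ∈ s.biUnion t, g x ≤ ∑ i ∈ s, ∑ x ∈ t i, g x := by
  classical
  induction s using Finset.induction with
  | empty => simp
  | @insert a s hnotmem ih =>
    rw [Finset.biUnion_insert, Finset.sum_insert hnotmem]
    have h1 : ∑ x ∈ t a ∪ s.biUnion t, g x + ∑ x ∈ t a ∩ s.biUnion t, g x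
        = ∑ x ∈ t a, g x + ∑ x ∈ s.biUnion t, g x := Finset.sum_union_inter
    have h2 : 0 ≤ ∑ x ∈ t a ∩ s.biUnion t, g x := Finset.sum_nonneg fun x _ => hg x
    linarith

lemma my_exists_exit (P : ℕ → Prop) :
    ∀ b a, a ≤ b → P a → ¬ P b → ∃ j, a ≤ j ∧ j < b ∧ P j ∧ ¬ P (j + 1) := by
  intro b
  induction b with
  | zero =>
    intro a ha hPa hPb
    interval_cases a
    exact absurd hPa hPb
  | succ b ih =>
    intro a ha hPa hPb
    rcases Nat.lt_succ_iff_lt_or_eq.1 (Nat.lt_succ_of_le ha) with h | rfl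
    · have ha' : a ≤ b := Nat.lt_succ_iff.1 h
      by_cases hb : P b
      · exact ⟨b, ha', Nat.lt_succ_self b, hb, hPb⟩
      · obtain ⟨j, h1, h2, h3, h4⟩ := ih a ha' hPa hb
        exact ⟨j, h1, Nat.lt_succ_of_lt h2, h3, h4⟩
    · exact absurd hPa hPb

lemma my_submodular_irrel {V : Type*} {i1 i2 : DecidableEq V} {f : Finset V → ℝ}
    (h : @Submodular V i1 f) : @Submodular V i2 f := by
  cases Subsingleton.elim i1 i2
  exact h

lemma my_incv_def {n : ℕ} (f : Finset (Fin n) → ℝ) (S : Finset (Fin n)) (e : Fin n) :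
    incv f S e = f (insert e (S.filter (fun s => s < e))) - f (S.filter (fun s => s < e)) := by
  rw [incv]

end MyHelpers

section RunLemmas

variable {n : ℕ} (G : SimpleGraph (Fin n)) [DecidableRel G.Adj]
  (f : Finset (Fin n) → ℝ) (β : ℝ) (S : ℕ → Finset (Fin n))

lemma my_mem_lt (hrun : IsGreedyRun G f β S) :
    ∀ j, j ≤ n → ∀ u ∈ S j, (u : ℕ) < j := by
  obtain ⟨hS0, hstep⟩ := hrun
  intro j
  induction j with
  | zero => intro _ u hu; rw [hS0] at hu; simp at hu
  | succ j ih =>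
    intro hj u hu
    have hjn : j < n := hj
    set i : Fin n := ⟨j, hjn⟩ with hi
    by_cases hacc : AcceptedStep G f β S i
    · have h2 : S (j + 1) = (S j \ conflictSet G i (S j)) ∪ {i} := (hstep i).1 hacc
      rw [h2] at hu
      rcases Finset.mem_union.1 hu with h | h
      · exact Nat.lt_succ_of_lt (ih hjn.le u (Finset.mem_sdiff.1 h).1)
      · have : u = i := Finset.mem_singleton.1 h
        rw [this]; exact Nat.lt_succ_self j
    · have h2 : S (j + 1) = S j := (hstep i).2 hacc
      rw [h2] at hu
      exact Nat.lt_succ_of_lt (ih hjn.le u hu)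

lemma my_S_subset_everAdded : ∀ j, j ≤ n → S j ⊆ everAdded S := by
  intro j hj u hu
  exact Finset.mem_biUnion.2 ⟨j, Finset.mem_range.2 (Nat.lt_succ_of_le hj), hu⟩

lemma my_stepkey (hsub : Submodular f)
    (hmono : ∀ A B : Finset (Fin n), A ⊆ B → f A ≤ f B) (hnorm : f ∅ = 0)
    (hrun : IsGreedyRun G f β S) (β0 : 0 < β)
    (i : Fin n) (hacc : AcceptedStep G f β S i) :
    f (S i.val) + β * ∑ c ∈ conflictSet G i (S i.val), incv f (S i.val) c
      ≤ f (S (i.val + 1)) := by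
  classical
  set Sc := S i.val with hSc
  set C := conflictSet G i Sc with hC
  set S' : Finset (Fin n) := insert i (Sc \ C) with hS'
  have hCsub : C ⊆ Sc := Finset.filter_subset _ _
  have hltI : ∀ u ∈ Sc, u < i := by
    intro u hu
    exact Fin.lt_def.2 (my_mem_lt G f β S hrun i.val i.is_lt.le u hu)
  have hiS : i ∉ Sc := fun h => absurd (hltI i h) (lt_irrefl i)
  have hiSd : i ∉ Sc \ C := fun h => hiS (Finset.mem_sdiff.1 h).1
  have hSeq : S (i.val + 1) = S' := by
    have h2 : S (i.val + 1) = (Sc \ C) ∪ {i} := (hrun.2 i).1 hacc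
    rw [h2, Finset.union_comm, hS']
    exact (Finset.insert_eq i _).symm
  have hfilti : S'.filter (fun s => s < i) = Sc \ C := by
    ext x
    simp only [hS', Finset.mem_filter, Finset.mem_insert]
    constructor
    · rintro ⟨hx | hx, hlt⟩
      · exact absurd hlt (by rw [hx]; exact lt_irrefl i)
      · exact hx
    · intro hx
      exact ⟨Or.inr hx, hltI x (Finset.mem_sdiff.1 hx).1⟩
  have hincvi : f (insert i Sc) - f Sc ≤ incv f S' i := by
    have hmarg : f (insert i Sc) - f Sc ≤ f (insert i (Sc \ C)) - f (Sc \ C) :=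
      my_marginal_antitone hsub hmono Finset.sdiff_subset i
    rw [my_incv_def, hfilti]
    exact hmarg
  have hincvc : ∀ c ∈ Sc \ C, incv f Sc c ≤ incv f S' c := by
    intro c hc
    apply my_incv_le (my_submodular_irrel hsub) hmono
    intro x hx
    simp only [Finset.mem_filter, hS', Finset.mem_insert] at hx ⊢
    obtain ⟨hx1 | hx1, hx2⟩ := hx
    · exact absurd (hx1 ▸ hx2) (not_lt.2 (hltI c (Finset.mem_sdiff.1 hc).1).le)
    · exact ⟨(Finset.mem_sdiff.1 hx1).1, hx2⟩
  have hsum' : f S' = incv f S' i + ∑ c ∈ Sc \ C, incv f S' c := by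
    rw [← my_sum_incv hnorm S', hS', Finset.sum_insert hiSd]
  have hsumSc : ∑ c ∈ Sc \ C, incv f Sc c + ∑ c ∈ C, incv f Sc c = f Sc := by
    rw [Finset.sum_sdiff hCsub, my_sum_incv hnorm]
  have haccle : (1 + β) * ∑ c ∈ C, incv f Sc c ≤ f (insert i Sc) - f Sc := hacc
  have hsumle : ∑ c ∈ Sc \ C, incv f Sc c ≤ ∑ c ∈ Sc \ C, incv f S' c :=
    Finset.sum_le_sum hincvc
  have hCnn : 0 ≤ ∑ c ∈ C, incv f Sc c :=
    Finset.sum_nonneg fun c _ => my_incv_nonneg hmono _ _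
  rw [hSeq, hsum']
  linarith

lemma my_runbound (hsub : Submodular f)
    (hmono : ∀ A B : Finset (Fin n), A ⊆ B → f A ≤ f B) (hnorm : f ∅ = 0)
    (hrun : IsGreedyRun G f β S) (β0 : 0 < β)
    (A : Finset (Fin n)) (hA : ∀ i : Fin n, i ∈ A ↔ AcceptedStep G f β S i) :
    β * ∑ i ∈ A, (∑ c ∈ conflictSet G i (S i.val), incv f (S i.val) c) ≤ f (S n) := by
  classical
  set L : Fin n → ℝ := fun i => ∑ c ∈ conflictSet G i (S i.val), incv f (S i.val) c with hL
  have main : ∀ j, j ≤ n → β * ∑ i ∈ A.filter (fun i : Fin n => (i : ℕ) < j), L i ≤ f (S j) := by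
    intro j
    induction j with
    | zero =>
      intro _
      have he : A.filter (fun i : Fin n => (i : ℕ) < 0) = ∅ := by
        apply Finset.filter_false_of_mem; intro x _; omega
      rw [he, hrun.1]
      simp [hnorm]
    | succ j ih =>
      intro hj
      have hjn : j < n := hj
      set i0 : Fin n := ⟨j, hjn⟩ with hi0
      have hsplitfilter : ∀ x : Fin n, ((x : ℕ) < j + 1) ↔ ((x : ℕ) < j ∨ x = i0) := by
        intro x
        constructor
        · intro h
          rcases Nat.lt_succ_iff_lt_or_eq.1 h with h | h
          · exact Or.inl h
          · exact Or.inr (Fin.ext h)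
        · rintro (h | rfl)
          · exact Nat.lt_succ_of_lt h
          · exact Nat.lt_succ_self j
      by_cases hacc : AcceptedStep G f β S i0
      · have hins : A.filter (fun i : Fin n => (i : ℕ) < j + 1)
            = insert i0 (A.filter (fun i : Fin n => (i : ℕ) < j)) := by
          ext x
          simp only [Finset.mem_filter, Finset.mem_insert]
          constructor
          · rintro ⟨hx1, hx2⟩
            rcases (hsplitfilter x).1 hx2 with h | h
            · exact Or.inr ⟨hx1, h⟩
            · exact Or.inl h
          · rintro (rfl | ⟨hx1, hx2⟩)
            · exact ⟨(hA i0).2 hacc, Nat.lt_succ_self j⟩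
            · exact ⟨hx1, Nat.lt_succ_of_lt hx2⟩
        have hnotmem : i0 ∉ A.filter (fun i : Fin n => (i : ℕ) < j) := by
          simp [Finset.mem_filter]
          intro _; exact le_rfl
        rw [hins, Finset.sum_insert hnotmem]
        have hkey : f (S j) + β * L i0 ≤ f (S (j + 1)) :=
          my_stepkey G f β S hsub hmono hnorm hrun β0 i0 hacc
        have hih := ih hjn.le
        have hexp : β * (L i0 + ∑ i ∈ A.filter (fun i : Fin n => (i : ℕ) < j), L i)
            = β * L i0 + β * ∑ i ∈ A.filter (fun i : Fin n => (i : ℕ) < j), L i := by ring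
        linarith
      · have heqf : A.filter (fun i : Fin n => (i : ℕ) < j + 1)
            = A.filter (fun i : Fin n => (i : ℕ) < j) := by
          ext x
          simp only [Finset.mem_filter]
          constructor
          · rintro ⟨hx1, hx2⟩
            rcases (hsplitfilter x).1 hx2 with h | rfl
            · exact ⟨hx1, h⟩
            · exact absurd ((hA i0).1 hx1) hacc
          · rintro ⟨hx1, hx2⟩
            exact ⟨hx1, Nat.lt_succ_of_lt hx2⟩
        have heqS : S (j + 1) = S j := (hrun.2 i0).2 hacc
        rw [heqf, heqS]
        exact ih hjn.le
  have hAfull : A.filter (fun i : Fin n => (i : ℕ) < n) = A := by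
    apply Finset.filter_true_of_mem
    intro x _
    exact x.is_lt
  have := main n le_rfl
  rwa [hAfull] at this

lemma my_exit (hrun : IsGreedyRun G f β S)
    (u : Fin n) (hu : u ∈ everAdded S) (hun : u ∉ S n) :
    ∃ i : Fin n, AcceptedStep G f β S i ∧ u ∈ conflictSet G i (S i.val) := by
  classical
  obtain ⟨j0, hj0, huj0⟩ := Finset.mem_biUnion.1 hu
  have hj0n : j0 ≤ n := Nat.lt_succ_iff.1 (Finset.mem_range.1 hj0)
  obtain ⟨j, _, hjn, hPj, hPj1⟩ := my_exists_exit (fun j => u ∈ S j) n j0 hj0n huj0 hun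
  set i : Fin n := ⟨j, hjn⟩ with hi
  by_cases hacc : AcceptedStep G f β S i
  · refine ⟨i, hacc, ?_⟩
    have h2 : S (j + 1) = (S j \ conflictSet G i (S j)) ∪ {i} := (hrun.2 i).1 hacc
    by_contra hC
    apply hPj1
    rw [h2]
    exact Finset.mem_union_left _ (Finset.mem_sdiff.2 ⟨hPj, hC⟩)
  · have h2 : S (j + 1) = S j := (hrun.2 i).2 hacc
    exact absurd (h2 ▸ hPj) hPj1

end RunLemmas

/-- Lemma `all-taken-elements-upper-bound`: the value of the set `U` of all elements ever
added is at most `(1 + 1/β) f(S_n)`. -/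
theorem all_taken_elements_upper_bound {n : ℕ}
    (G : SimpleGraph (Fin n)) [DecidableRel G.Adj]
    (f : Finset (Fin n) → ℝ) (hsub : Submodular f)
    (hmono : ∀ A B : Finset (Fin n), A ⊆ B → f A ≤ f B) (hnorm : f ∅ = 0)
    (β : ℝ) (hβ : 0 < β)
    (S : ℕ → Finset (Fin n)) (hrun : IsGreedyRun G f β S) :
    f (everAdded S) ≤ (1 + 1 / β) * f (S n) := by
  classical
  set A : Finset (Fin n) := Finset.univ.filter (fun i => AcceptedStep G f β S i) with hA
  have hAmem : ∀ i : Fin n, i ∈ A ↔ AcceptedStep G f β S i := by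
    intro i; simp [hA]
  set L : Fin n → ℝ := fun i => ∑ c ∈ conflictSet G i (S i.val), incv f (S i.val) c with hL
  set U : Finset (Fin n) := everAdded S with hU
  have hSnU : S n ⊆ U := my_S_subset_everAdded S n le_rfl
  have hfU : f U = ∑ u ∈ U \ S n, incv f U u + ∑ u ∈ S n, incv f U u := by
    rw [Finset.sum_sdiff hSnU, my_sum_incv hnorm]
  have hpart1 : ∑ u ∈ S n, incv f U u ≤ f (S n) := by
    rw [← my_sum_incv hnorm (S n)]
    apply Finset.sum_le_sum
    intro u _
    exact my_incv_le (my_submodular_irrel hsub) hmono (Finset.filter_subset_filter _ hSnU)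
  have hsubU : U \ S n ⊆ A.biUnion (fun i => conflictSet G i (S i.val)) := by
    intro u hu
    obtain ⟨hu1, hu2⟩ := Finset.mem_sdiff.1 hu
    obtain ⟨i, hi1, hi2⟩ := my_exit G f β S hrun u hu1 hu2
    exact Finset.mem_biUnion.2 ⟨i, (hAmem i).2 hi1, hi2⟩
  have hpart2 : ∑ u ∈ U \ S n, incv f U u ≤ ∑ i ∈ A, L i := by
    calc ∑ u ∈ U \ S n, incv f U u
        ≤ ∑ u ∈ A.biUnion (fun i => conflictSet G i (S i.val)), incv f U u := by
          apply Finset.sum_le_sum_of_subset_of_nonneg hsubU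
          intro u _ _
          exact my_incv_nonneg hmono _ _
      _ ≤ ∑ i ∈ A, ∑ c ∈ conflictSet G i (S i.val), incv f U c :=
          my_sum_biUnion_le A _ _ (fun x => my_incv_nonneg hmono _ _)
      _ ≤ ∑ i ∈ A, L i := by
          apply Finset.sum_le_sum
          intro i _
          apply Finset.sum_le_sum
          intro c _
          exact my_incv_le (my_submodular_irrel hsub) hmono
            (Finset.filter_subset_filter _ (my_S_subset_everAdded S i.val i.is_lt.le))
  have htot : β * ∑ i ∈ A, L i ≤ f (S n) :=
    my_runbound G f β S hsub hmono hnorm hrun hβ A hAmem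
  have hTle : ∑ i ∈ A, L i ≤ f (S n) / β := by
    rw [le_div_iff₀ hβ]
    linarith
  have hfinal : (1 + 1 / β) * f (S n) = f (S n) + f (S n) / β := by
    field_simp
  linarith
end
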